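/- arXiv:1409.5285 — 6 statements merged into one kernel-verified Lean document; each statement's English description precedes it below -/
import Mathlib

section
/- Let 0 < α < 1/2, set γ(α) = α/(2α−1) and z(y,α) = y²(2α−1)/2, and let F(y,α) = y·M(γ(α), 3/2, z(y,α)) + [Γ(1−γ(α)) / (√(2(1−2α))·Γ(3/2−γ(α)))]·M(γ(α)−1/2, 1/2, z(y,α)). Then for every constant C ∈ ℝ the function f(y) = C·F(y,α) is twice continuously differentiable on ℝ and satisfies f''(y) − (2α−1) y f'(y) − f(y) = 0 for all y ∈ ℝ. -/
open Real Filter Polynomial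
open scoped Nat
set_option maxHeartbeats 1000000

/-- Confluent hypergeometric function of the first kind,
`M(γ,β,z) = ∑ (γ)⁽ⁿ⁾ zⁿ / ((β)⁽ⁿ⁾ n!)`. -/
noncomputable def M (γ β z : ℝ) : ℝ :=
  ∑' n : ℕ, ((ascPochhammer ℝ n).eval γ * z ^ n) /
    ((ascPochhammer ℝ n).eval β * (Nat.factorial n : ℝ))

/-- The candidate solution for `0 < α < 1/2`. -/
noncomputable def F (α y : ℝ) : ℝ :=
  y * M (α / (2 * α - 1)) (3 / 2) (y ^ 2 * (2 * α - 1) / 2) +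
    Real.Gamma (1 - α / (2 * α - 1)) /
      (Real.sqrt (2 * (1 - 2 * α)) * Real.Gamma (3 / 2 - α / (2 * α - 1))) *
    M (α / (2 * α - 1) - 1 / 2) (1 / 2) (y ^ 2 * (2 * α - 1) / 2)

namespace Stmt1Aux

noncomputable def po (x : ℝ) (k : ℕ) : ℝ := (ascPochhammer ℝ k).eval x

lemma po_zero (x : ℝ) : po x 0 = 1 := by simp [po]

lemma po_succ (x : ℝ) (k : ℕ) : po x (k + 1) = po x k * (x + k) := by
  simp [po, ascPochhammer_succ_eval]

lemma po_pos {x : ℝ} (hx : 0 < x) (k : ℕ) : 0 < po x k :=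
  ascPochhammer_pos k x hx

lemma po_abs_le (x : ℝ) {y : ℝ} (hy : 0 < y) (k : ℕ) :
    |po x k| ≤ (1 + |x| / y) ^ k * po y k := by
  induction k with
  | zero => simp [po_zero]
  | succ k ih =>
    rw [po_succ, po_succ, abs_mul]
    have h0 : (0:ℝ) ≤ |x| * k / y := by positivity
    have h1 : |x + (k:ℝ)| ≤ (1 + |x| / y) * (y + k) := by
      have h2 : (1 + |x| / y) * (y + k) = y + k + |x| + |x| * k / y := by
        field_simp; ring
      calc |x + (k:ℝ)| ≤ |x| + |(k:ℝ)| := abs_add_le x k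
        _ = |x| + k := by rw [Nat.abs_cast]
        _ ≤ y + k + |x| + |x| * k / y := by linarith
        _ = (1 + |x| / y) * (y + k) := h2.symm
    calc |po x k| * |x + (k:ℝ)|
        ≤ ((1 + |x| / y) ^ k * po y k) * ((1 + |x| / y) * (y + k)) := by
          apply mul_le_mul ih h1 (abs_nonneg _)
          exact mul_nonneg (by positivity) (po_pos hy k).le
      _ = (1 + |x| / y) ^ (k + 1) * (po y k * (y + k)) := by ring

lemma summable_pow_mul_exp (j : ℕ) {x : ℝ} (hx : 0 < x) :
    Summable (fun n : ℕ => ((n:ℝ) + 1) ^ j * x ^ n / n !) := by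
  apply summable_of_ratio_norm_eventually_le (r := 1/2) (by norm_num)
  filter_upwards [eventually_ge_atTop (⌈(2:ℝ) ^ (j + 1) * x⌉₊)] with n hn
  have hn' : (2:ℝ) ^ (j + 1) * x ≤ n := le_trans (Nat.le_ceil _) (by exact_mod_cast hn)
  have hfac : (0:ℝ) < n ! := by positivity
  have key : ((n:ℝ) + 2) ^ j * x ≤ 1/2 * (((n:ℝ) + 1) ^ j * ((n:ℝ) + 1)) := by
    have h1 : ((n:ℝ) + 2) ^ j ≤ 2 ^ j * ((n:ℝ) + 1) ^ j := by
      rw [← mul_pow]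
      apply pow_le_pow_left₀ (by positivity)
      linarith
    have h2 : x ≤ ((n:ℝ) + 1) / 2 ^ (j + 1) := by
      rw [le_div_iff₀ (by positivity)]
      nlinarith [pow_pos (show (0:ℝ) < 2 by norm_num) (j+1)]
    calc ((n:ℝ) + 2) ^ j * x
        ≤ (2 ^ j * ((n:ℝ) + 1) ^ j) * (((n:ℝ) + 1) / 2 ^ (j + 1)) := by
          apply mul_le_mul h1 h2 hx.le (by positivity)
      _ = 1/2 * (((n:ℝ) + 1) ^ j * ((n:ℝ) + 1)) := by
          rw [pow_succ]; field_simp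
  rw [Real.norm_eq_abs, Real.norm_eq_abs, abs_of_nonneg (by positivity),
    abs_of_nonneg (by positivity)]
  have expand : ((↑(n+1):ℝ) + 1) ^ j * x ^ (n+1) / (↑(n+1)! : ℝ)
      = (((n:ℝ) + 2) ^ j * x / ((n:ℝ) + 1)) * (x ^ n / n !) := by
    rw [Nat.factorial_succ]
    push_cast
    field_simp
    ring
  rw [expand]
  have h3 : ((n:ℝ) + 2) ^ j * x / ((n:ℝ) + 1) ≤ 1/2 * ((n:ℝ) + 1) ^ j := by
    rw [div_le_iff₀ (by positivity)]
    calc ((n:ℝ) + 2) ^ j * x ≤ 1/2 * (((n:ℝ) + 1) ^ j * ((n:ℝ) + 1)) := key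
      _ = 1/2 * ((n:ℝ) + 1) ^ j * ((n:ℝ) + 1) := by ring
  calc (((n:ℝ) + 2) ^ j * x / ((n:ℝ) + 1)) * (x ^ n / n !)
      ≤ (1/2 * ((n:ℝ) + 1) ^ j) * (x ^ n / n !) :=
        mul_le_mul_of_nonneg_right h3 (by positivity)
    _ = 1/2 * (((n:ℝ) + 1) ^ j * x ^ n / n !) := by ring

lemma summable_main (j : ℕ) (x : ℝ) {y : ℝ} (hy : 0 < y) {u : ℝ} (hu : 0 ≤ u) :
    Summable (fun k : ℕ => ((k:ℝ) + 1) ^ j * (|po x k| * u ^ k / (po y k * k !))) := by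
  set q := (1 + |x| / y) * u + 1 with hq
  have hq0 : 0 < q := by positivity
  have hnn : ∀ k : ℕ, 0 ≤ ((k:ℝ) + 1) ^ j * (|po x k| * u ^ k / (po y k * k !)) := by
    intro k
    have hpo := po_pos hy k
    have hfac : (0:ℝ) < (k ! : ℝ) := by positivity
    apply mul_nonneg (by positivity)
    exact div_nonneg (mul_nonneg (abs_nonneg _) (pow_nonneg hu k)) (mul_pos hpo hfac).le
  apply Summable.of_nonneg_of_le hnn (fun k => ?_) (summable_pow_mul_exp j hq0)
  have hpo := po_pos hy k
  have hfac : (0:ℝ) < (k ! : ℝ) := by positivity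
  have h1 : |po x k| * u ^ k ≤ q ^ k * po y k := by
    calc |po x k| * u ^ k ≤ ((1 + |x| / y) ^ k * po y k) * u ^ k :=
          mul_le_mul_of_nonneg_right (po_abs_le x hy k) (pow_nonneg hu k)
      _ = ((1 + |x| / y) * u) ^ k * po y k := by rw [mul_pow]; ring
      _ ≤ q ^ k * po y k := by
          apply mul_le_mul_of_nonneg_right _ hpo.le
          apply pow_le_pow_left₀ (by positivity)
          rw [hq]; linarith
  have h2 : |po x k| * u ^ k / (po y k * k !) ≤ q ^ k / k ! := by
    rw [div_le_div_iff₀ (mul_pos hpo hfac) hfac]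
    calc |po x k| * u ^ k * k ! ≤ (q ^ k * po y k) * k ! :=
          mul_le_mul_of_nonneg_right h1 hfac.le
      _ = q ^ k * (po y k * k !) := by ring
  calc ((k:ℝ) + 1) ^ j * (|po x k| * u ^ k / (po y k * k !))
      ≤ ((k:ℝ) + 1) ^ j * (q ^ k / k !) :=
        mul_le_mul_of_nonneg_left h2 (by positivity)
    _ = ((k:ℝ) + 1) ^ j * q ^ k / k ! := by ring

noncomputable def KK (α : ℝ) : ℝ :=
  Real.Gamma (1 - α / (2 * α - 1)) /
    (Real.sqrt (2 * (1 - 2 * α)) * Real.Gamma (3 / 2 - α / (2 * α - 1)))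

noncomputable def co (α : ℝ) (n : ℕ) : ℝ :=
  if n % 2 = 0 then
    KK α * (po (α / (2 * α - 1) - 1 / 2) (n / 2) * ((2 * α - 1) / 2) ^ (n / 2)) /
      (po (1 / 2) (n / 2) * (n / 2)!)
  else
    po (α / (2 * α - 1)) (n / 2) * ((2 * α - 1) / 2) ^ (n / 2) /
      (po (3 / 2) (n / 2) * (n / 2)!)

lemma co_even (α : ℝ) (k : ℕ) :
    co α (2 * k) = KK α * (po (α / (2 * α - 1) - 1 / 2) k * ((2 * α - 1) / 2) ^ k) /
      (po (1 / 2) k * k !) := by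
  have h1 : (2 * k) % 2 = 0 := by omega
  have h2 : (2 * k) / 2 = k := by omega
  simp only [co, h1, h2, if_true]

lemma co_odd (α : ℝ) (k : ℕ) :
    co α (2 * k + 1) = po (α / (2 * α - 1)) k * ((2 * α - 1) / 2) ^ k /
      (po (3 / 2) k * k !) := by
  have h1 : (2 * k + 1) % 2 = 1 := by omega
  have h2 : (2 * k + 1) / 2 = k := by omega
  simp only [co, h1, h2]
  norm_num

def Master (a : ℕ → ℝ) : Prop :=
  ∀ (j : ℕ) (r : ℝ), 0 < r → Summable (fun n : ℕ => ((n:ℝ) + 1) ^ j * |a n| * r ^ n)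

lemma co_master (α : ℝ) : Master (co α) := by
  intro j r hr
  have hnn : ∀ n : ℕ, 0 ≤ ((n:ℝ) + 1) ^ j * |co α n| * r ^ n := fun n =>
    mul_nonneg (mul_nonneg (by positivity) (abs_nonneg _)) (pow_nonneg hr.le n)
  apply Summable.even_add_odd
  · -- even part
    have base := summable_main j (α / (2 * α - 1) - 1 / 2) (y := 1/2) one_half_pos
      (u := |(2 * α - 1) / 2| * r ^ 2) (by positivity)
    apply Summable.of_nonneg_of_le (fun k => hnn (2 * k)) (fun k => ?_)
      (base.mul_left (|KK α| * 2 ^ j))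
    have hpo := po_pos (show (0:ℝ) < 1/2 by norm_num) k
    have hfac : (0:ℝ) < (k ! : ℝ) := by positivity
    have habs : |co α (2 * k)| =
        |KK α| * (|po (α / (2 * α - 1) - 1 / 2) k| * |(2 * α - 1) / 2| ^ k /
          (po (1/2) k * k !)) := by
      rw [co_even, abs_div, abs_mul, abs_mul, abs_pow,
        abs_of_pos (mul_pos hpo hfac)]
      ring
    rw [habs]
    have hle : ((2 * (k:ℝ)) + 1) ^ j ≤ 2 ^ j * ((k:ℝ) + 1) ^ j := by
      rw [← mul_pow]
      apply pow_le_pow_left₀ (by positivity)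
      linarith
    have hmid : (0:ℝ) ≤ |po (α / (2 * α - 1) - 1 / 2) k| *
        (|(2 * α - 1) / 2| * r ^ 2) ^ k / (po (1/2) k * k !) :=
      div_nonneg (mul_nonneg (abs_nonneg _) (by positivity)) (mul_pos hpo hfac).le
    calc ((↑(2 * k) : ℝ) + 1) ^ j *
          (|KK α| * (|po (α / (2 * α - 1) - 1 / 2) k| * |(2 * α - 1) / 2| ^ k /
            (po (1/2) k * k !))) * r ^ (2 * k)
        = ((2 * (k:ℝ)) + 1) ^ j * (|KK α| *
            (|po (α / (2 * α - 1) - 1 / 2) k| * (|(2 * α - 1) / 2| * r ^ 2) ^ k /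
              (po (1/2) k * k !))) := by
          push_cast
          rw [pow_mul, mul_pow]
          ring
      _ ≤ (2 ^ j * ((k:ℝ) + 1) ^ j) * (|KK α| *
            (|po (α / (2 * α - 1) - 1 / 2) k| * (|(2 * α - 1) / 2| * r ^ 2) ^ k /
              (po (1/2) k * k !))) :=
          mul_le_mul_of_nonneg_right hle (mul_nonneg (abs_nonneg _) hmid)
      _ = |KK α| * 2 ^ j * (((k:ℝ) + 1) ^ j *
            (|po (α / (2 * α - 1) - 1 / 2) k| * (|(2 * α - 1) / 2| * r ^ 2) ^ k /
              (po (1/2) k * k !))) := by ring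
  · -- odd part
    have base := summable_main j (α / (2 * α - 1)) (y := 3/2)
      (show (0:ℝ) < 3/2 by norm_num) (u := |(2 * α - 1) / 2| * r ^ 2) (by positivity)
    apply Summable.of_nonneg_of_le (fun k => hnn (2 * k + 1)) (fun k => ?_)
      (base.mul_left (2 ^ j * r))
    have hpo := po_pos (show (0:ℝ) < 3/2 by norm_num) k
    have hfac : (0:ℝ) < (k ! : ℝ) := by positivity
    have habs : |co α (2 * k + 1)| =
        |po (α / (2 * α - 1)) k| * |(2 * α - 1) / 2| ^ k / (po (3/2) k * k !) := by
      rw [co_odd, abs_div, abs_mul, abs_pow, abs_of_pos (mul_pos hpo hfac)]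
    rw [habs]
    have hle : ((2 * (k:ℝ)) + 2) ^ j ≤ 2 ^ j * ((k:ℝ) + 1) ^ j := by
      rw [← mul_pow]
      apply pow_le_pow_left₀ (by positivity)
      linarith
    have hmid : (0:ℝ) ≤ |po (α / (2 * α - 1)) k| *
        (|(2 * α - 1) / 2| * r ^ 2) ^ k / (po (3/2) k * k !) :=
      div_nonneg (mul_nonneg (abs_nonneg _) (by positivity)) (mul_pos hpo hfac).le
    calc ((↑(2 * k + 1) : ℝ) + 1) ^ j *
          (|po (α / (2 * α - 1)) k| * |(2 * α - 1) / 2| ^ k / (po (3/2) k * k !)) *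
          r ^ (2 * k + 1)
        = ((2 * (k:ℝ)) + 2) ^ j * (r *
            (|po (α / (2 * α - 1)) k| * (|(2 * α - 1) / 2| * r ^ 2) ^ k /
              (po (3/2) k * k !))) := by
          push_cast
          rw [pow_succ, pow_mul, mul_pow]
          ring
      _ ≤ (2 ^ j * ((k:ℝ) + 1) ^ j) * (r *
            (|po (α / (2 * α - 1)) k| * (|(2 * α - 1) / 2| * r ^ 2) ^ k /
              (po (3/2) k * k !))) :=
          mul_le_mul_of_nonneg_right hle (mul_nonneg hr.le hmid)
      _ = 2 ^ j * r * (((k:ℝ) + 1) ^ j *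
            (|po (α / (2 * α - 1)) k| * (|(2 * α - 1) / 2| * r ^ 2) ^ k /
              (po (3/2) k * k !))) := by ring

lemma master_shift {a : ℕ → ℝ} (h : Master a) :
    Master (fun n => ((n:ℝ) + 1) * a (n + 1)) := by
  intro j r hr
  have h2 := h (j + 1) r hr
  have h3 : Summable (fun n : ℕ => ((n:ℝ) + 2) ^ (j + 1) * |a (n + 1)| * r ^ (n + 1)) := by
    have h4 := (summable_nat_add_iff (f := fun n : ℕ =>
      ((n:ℝ) + 1) ^ (j + 1) * |a n| * r ^ n) 1).2 h2
    apply h4.congr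
    intro n
    push_cast
    ring
  apply Summable.of_nonneg_of_le (fun n => ?_) (fun n => ?_) (h3.mul_left r⁻¹)
  · exact mul_nonneg (mul_nonneg (by positivity) (abs_nonneg _)) (pow_nonneg hr.le n)
  · have habs : |((n:ℝ) + 1) * a (n + 1)| = ((n:ℝ) + 1) * |a (n + 1)| := by
      rw [abs_mul, abs_of_nonneg (by positivity)]
    rw [habs]
    have hle : ((n:ℝ) + 1) ^ j * (((n:ℝ) + 1) * |a (n + 1)|) * r ^ n
        ≤ ((n:ℝ) + 2) ^ (j + 1) * |a (n + 1)| * r ^ n := by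
      apply mul_le_mul_of_nonneg_right _ (pow_nonneg hr.le n)
      have : ((n:ℝ) + 1) ^ j * ((n:ℝ) + 1) = ((n:ℝ) + 1) ^ (j + 1) := by
        rw [pow_succ]
      calc ((n:ℝ) + 1) ^ j * (((n:ℝ) + 1) * |a (n + 1)|)
          = ((n:ℝ) + 1) ^ (j + 1) * |a (n + 1)| := by rw [← this]; ring
        _ ≤ ((n:ℝ) + 2) ^ (j + 1) * |a (n + 1)| := by
            apply mul_le_mul_of_nonneg_right _ (abs_nonneg _)
            apply pow_le_pow_left₀ (by positivity)
            linarith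
    calc ((n:ℝ) + 1) ^ j * (((n:ℝ) + 1) * |a (n + 1)|) * r ^ n
        ≤ ((n:ℝ) + 2) ^ (j + 1) * |a (n + 1)| * r ^ n := hle
      _ = r⁻¹ * (((n:ℝ) + 2) ^ (j + 1) * |a (n + 1)| * r ^ (n + 1)) := by
          rw [pow_succ]
          field_simp
          ring

lemma summable_apply {a : ℕ → ℝ} (h : Master a) (y : ℝ) :
    Summable (fun n => a n * y ^ n) := by
  have hr : (0:ℝ) < |y| + 1 := by positivity
  apply Summable.of_norm_bounded (h 0 (|y| + 1) hr)
  intro n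
  rw [Real.norm_eq_abs, abs_mul, abs_pow, pow_zero, one_mul]
  apply mul_le_mul_of_nonneg_left _ (abs_nonneg _)
  apply pow_le_pow_left₀ (abs_nonneg y)
  linarith

lemma hasDerivAt_series {a : ℕ → ℝ} (h : Master a) (y : ℝ) :
    HasDerivAt (fun z : ℝ => ∑' n, a n * z ^ n)
      (∑' n : ℕ, ((n:ℝ) + 1) * a (n + 1) * y ^ n) y := by
  set R := |y| + 1 with hR
  have hR0 : 0 < R := by positivity
  have hR1 : 1 ≤ R := by rw [hR]; have := abs_nonneg y; linarith
  have hmem : y ∈ Metric.ball (0:ℝ) R := by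
    simp only [Metric.mem_ball, dist_zero_right, Real.norm_eq_abs]
    rw [hR]; linarith
  have hu : Summable (fun n : ℕ => ((n:ℝ) + 1) * |a n| * R ^ n) := by
    have := h 1 R hR0
    simpa using this
  have hbound : ∀ (n : ℕ) (z : ℝ), z ∈ Metric.ball (0:ℝ) R →
      ‖a n * ((n:ℝ) * z ^ (n - 1))‖ ≤ ((n:ℝ) + 1) * |a n| * R ^ n := by
    intro n z hz
    have hz' : |z| ≤ R := by
      simp only [Metric.mem_ball, dist_zero_right, Real.norm_eq_abs] at hz
      linarith
    rw [Real.norm_eq_abs, abs_mul, abs_mul, abs_pow]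
    rw [Nat.abs_cast]
    have h1 : |z| ^ (n - 1) ≤ R ^ (n - 1) := pow_le_pow_left₀ (abs_nonneg z) hz' _
    have h2 : (n:ℝ) * R ^ (n - 1) ≤ ((n:ℝ) + 1) * R ^ n := by
      cases n with
      | zero => simp
      | succ m =>
        simp only [Nat.add_sub_cancel]
        push_cast
        have : R ^ m ≤ R ^ (m + 1) := by
          calc R ^ m = R ^ m * 1 := by ring
            _ ≤ R ^ m * R := by
                apply mul_le_mul_of_nonneg_left hR1 (pow_nonneg hR0.le m)
            _ = R ^ (m + 1) := by rw [pow_succ]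
        nlinarith [pow_nonneg hR0.le m, pow_nonneg hR0.le (m + 1)]
    calc |a n| * ((n:ℝ) * |z| ^ (n - 1))
        ≤ |a n| * ((n:ℝ) * R ^ (n - 1)) := by
          apply mul_le_mul_of_nonneg_left _ (abs_nonneg _)
          exact mul_le_mul_of_nonneg_left h1 (Nat.cast_nonneg n)
      _ ≤ |a n| * (((n:ℝ) + 1) * R ^ n) :=
          mul_le_mul_of_nonneg_left h2 (abs_nonneg _)
      _ = ((n:ℝ) + 1) * |a n| * R ^ n := by ring
  have key := hasDerivAt_tsum_of_isPreconnected hu Metric.isOpen_ball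
    (convex_ball (0:ℝ) R).isPreconnected
    (g := fun n z => a n * z ^ n) (g' := fun n z => a n * ((n:ℝ) * z ^ (n - 1)))
    (fun n z _ => (hasDerivAt_pow n z).const_mul (a n))
    hbound hmem (summable_apply h y) hmem
  have hsum2 : Summable (fun n => a n * ((n:ℝ) * y ^ (n - 1))) :=
    Summable.of_norm_bounded hu (fun n => hbound n y hmem)
  have heq : ∑' n : ℕ, a n * ((n:ℝ) * y ^ (n - 1)) = ∑' n : ℕ, ((n:ℝ) + 1) * a (n + 1) * y ^ n := by
    rw [Summable.tsum_eq_zero_add hsum2]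
    simp only [Nat.cast_zero, zero_mul, mul_zero, zero_add]
    apply tsum_congr
    intro n
    have hsub : n + 1 - 1 = n := rfl
    rw [hsub]
    push_cast
    ring
  rw [heq] at key
  exact key

lemma co_rec (α : ℝ) (hα' : α < 1 / 2) (n : ℕ) :
    ((n:ℝ) + 2) * ((n:ℝ) + 1) * co α (n + 2) = ((2 * α - 1) * n + 1) * co α n := by
  have hc : (2 * α - 1) ≠ 0 := by intro h; nlinarith
  obtain ⟨k, rfl | rfl⟩ := Nat.even_or_odd' n
  · have e1 : 2 * k + 2 = 2 * (k + 1) := by ring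
    rw [e1, co_even, co_even]
    have h12 : po (1/2 : ℝ) k ≠ 0 := (po_pos one_half_pos k).ne'
    have hk : ((k ! : ℕ) : ℝ) ≠ 0 := Nat.cast_ne_zero.2 (Nat.factorial_ne_zero k)
    rw [po_succ, po_succ, Nat.factorial_succ, pow_succ]
    have h15 : (1/2 : ℝ) + k ≠ 0 := by positivity
    push_cast
    set B := KK α
    set p := po (α/(2*α-1) - 1/2) k
    set q := po (1/2:ℝ) k
    set w := ((2*α-1)/2)^k
    field_simp
    ring
  · have e1 : 2 * k + 1 + 2 = 2 * (k + 1) + 1 := by ring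
    rw [e1, co_odd, co_odd]
    have h32 : po (3/2 : ℝ) k ≠ 0 := (po_pos (by norm_num) k).ne'
    have hk : ((k ! : ℕ) : ℝ) ≠ 0 := Nat.cast_ne_zero.2 (Nat.factorial_ne_zero k)
    rw [po_succ, po_succ, Nat.factorial_succ, pow_succ]
    have h15 : (3/2 : ℝ) + k ≠ 0 := by positivity
    push_cast
    set p := po (α/(2*α-1)) k
    set q := po (3/2:ℝ) k
    set w := ((2*α-1)/2)^k
    field_simp
    ring

lemma F_eq (α : ℝ) (y : ℝ) : F α y = ∑' n, co α n * y ^ n := by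
  have hs : Summable (fun n => co α n * y ^ n) := summable_apply (co_master α) y
  have hinj1 : Function.Injective (fun k : ℕ => 2 * k) := by intro a b hab; simpa using hab
  have hinj2 : Function.Injective (fun k : ℕ => 2 * k + 1) := by intro a b hab; simp at hab; omega
  have he : Summable (fun k => co α (2 * k) * y ^ (2 * k)) := hs.comp_injective hinj1
  have ho : Summable (fun k => co α (2 * k + 1) * y ^ (2 * k + 1)) := hs.comp_injective hinj2
  have hsplit := tsum_even_add_odd (f := fun n => co α n * y ^ n) he ho
  rw [← hsplit]
  have heven : ∑' k, co α (2 * k) * y ^ (2 * k)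
      = KK α * M (α / (2 * α - 1) - 1 / 2) (1 / 2) (y ^ 2 * (2 * α - 1) / 2) := by
    rw [M, ← tsum_mul_left]
    apply tsum_congr
    intro k
    rw [co_even]
    simp only [po]
    have hb : y ^ 2 * (2 * α - 1) / 2 = y ^ 2 * ((2 * α - 1) / 2) := by ring
    rw [hb, mul_pow, pow_mul]
    ring
  have hodd : ∑' k, co α (2 * k + 1) * y ^ (2 * k + 1)
      = y * M (α / (2 * α - 1)) (3 / 2) (y ^ 2 * (2 * α - 1) / 2) := by
    rw [M, ← tsum_mul_left]
    apply tsum_congr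
    intro k
    rw [co_odd]
    simp only [po]
    have hb : y ^ 2 * (2 * α - 1) / 2 = y ^ 2 * ((2 * α - 1) / 2) := by ring
    rw [hb, mul_pow, pow_succ, pow_mul]
    ring
  rw [heven, hodd, F, KK]
  ring

noncomputable def d1 (α : ℝ) (n : ℕ) : ℝ := ((n:ℝ) + 1) * co α (n + 1)
noncomputable def d2 (α : ℝ) (n : ℕ) : ℝ := ((n:ℝ) + 1) * d1 α (n + 1)

lemma d1_master (α : ℝ) : Master (d1 α) := master_shift (co_master α)
lemma d2_master (α : ℝ) : Master (d2 α) := master_shift (d1_master α)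

lemma ode_key (α : ℝ) (hα' : α < 1 / 2) (y : ℝ) :
    (∑' n, d2 α n * y ^ n) - (2 * α - 1) * y * (∑' n, d1 α n * y ^ n)
      - (∑' n, co α n * y ^ n) = 0 := by
  have hd1 := d1_master α
  have hd2 := d2_master α
  have hco := co_master α
  have hs0 : Summable (fun n => co α n * y ^ n) := summable_apply hco y
  have hs1 : Summable (fun n => d1 α n * y ^ n) := summable_apply hd1 y
  have hs2 : Summable (fun n => d2 α n * y ^ n) := summable_apply hd2 y
  -- rewrite the middle term
  have hmid : (2 * α - 1) * y * (∑' n, d1 α n * y ^ n)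
      = ∑' n, ((2 * α - 1) * d1 α n) * y ^ (n + 1) := by
    rw [← tsum_mul_left]
    apply tsum_congr
    intro n
    rw [pow_succ]
    ring
  have hE2 : (∑' n, d2 α n * y ^ n)
      = d2 α 0 + ∑' n, d2 α (n + 1) * y ^ (n + 1) := by
    rw [Summable.tsum_eq_zero_add hs2]
    simp
  have hE0 : (∑' n, co α n * y ^ n)
      = co α 0 + ∑' n, co α (n + 1) * y ^ (n + 1) := by
    rw [Summable.tsum_eq_zero_add hs0]
    simp
  have hA : Summable (fun n => d2 α (n + 1) * y ^ (n + 1)) :=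
    (summable_nat_add_iff 1).2 hs2
  have hB : Summable (fun n => ((2 * α - 1) * d1 α n) * y ^ (n + 1)) := by
    have := hs1.mul_left ((2 * α - 1) * y)
    apply this.congr
    intro n
    rw [pow_succ]
    ring
  have hC : Summable (fun n => co α (n + 1) * y ^ (n + 1)) :=
    (summable_nat_add_iff 1).2 hs0
  rw [hmid, hE2, hE0]
  have hterm : ∀ n : ℕ, d2 α (n + 1) * y ^ (n + 1)
      - ((2 * α - 1) * d1 α n) * y ^ (n + 1) - co α (n + 1) * y ^ (n + 1) = 0 := by
    intro n
    have hrec := co_rec α hα' (n + 1)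
    have hd2v : d2 α (n + 1) = ((n:ℝ) + 2) * (((n:ℝ) + 3) * co α (n + 3)) := by
      simp only [d2, d1]
      push_cast
      ring
    have hd1v : d1 α n = ((n:ℝ) + 1) * co α (n + 1) := rfl
    rw [hd2v, hd1v]
    have : ((n:ℝ) + 2) * (((n:ℝ) + 3) * co α (n + 3))
        = ((2 * α - 1) * ((n:ℝ) + 1) + 1) * co α (n + 1) := by
      have h3 : (n:ℕ) + 1 + 2 = n + 3 := by ring
      rw [h3] at hrec
      push_cast at hrec
      nlinarith [hrec]
    rw [this]
    ring
  have hzero : ∑' n, (d2 α (n + 1) * y ^ (n + 1)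
      - ((2 * α - 1) * d1 α n) * y ^ (n + 1) - co α (n + 1) * y ^ (n + 1)) = 0 := by
    rw [tsum_congr hterm]
    exact tsum_zero
  have hd20 : d2 α 0 = co α 0 := by
    have hrec := co_rec α hα' 0
    simp only [d2, d1]
    push_cast
    push_cast at hrec
    nlinarith [hrec]
  have hsub : (∑' n, d2 α (n + 1) * y ^ (n + 1))
      - (∑' n, ((2 * α - 1) * d1 α n) * y ^ (n + 1))
      - (∑' n, co α (n + 1) * y ^ (n + 1))
      = ∑' n, (d2 α (n + 1) * y ^ (n + 1)
        - ((2 * α - 1) * d1 α n) * y ^ (n + 1) - co α (n + 1) * y ^ (n + 1)) := by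
    rw [← Summable.tsum_sub hA hB, ← Summable.tsum_sub (hA.sub hB) hC]
  have := hsub.trans hzero
  linarith [this, hd20]

end Stmt1Aux

open Stmt1Aux in
theorem stmt_1 (α : ℝ) (hα : 0 < α) (hα' : α < 1 / 2) (C : ℝ) :
    ContDiff ℝ 2 (fun y => C * F α y) ∧
    ∀ y : ℝ,
      deriv (deriv (fun y => C * F α y)) y - (2 * α - 1) * y * deriv (fun y => C * F α y) y -
        C * F α y = 0 := by
  have hco := co_master α
  have hd1 := d1_master α
  have hd2 := d2_master α
  have hFg : (fun y => C * F α y) = fun y => C * ∑' n, co α n * y ^ n :=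
    funext fun y => by rw [F_eq]
  have h1 : ∀ y : ℝ, HasDerivAt (fun y => C * F α y) (C * ∑' n, d1 α n * y ^ n) y := by
    intro y
    rw [hFg]
    exact (hasDerivAt_series hco y).const_mul C
  have h2 : ∀ y : ℝ, HasDerivAt (fun y => C * ∑' n, d1 α n * y ^ n)
      (C * ∑' n, d2 α n * y ^ n) y := fun y =>
    (hasDerivAt_series hd1 y).const_mul C
  have h3 : ∀ y : ℝ, HasDerivAt (fun y => C * ∑' n, d2 α n * y ^ n)
      (C * ∑' n : ℕ, ((n:ℝ) + 1) * d2 α (n + 1) * y ^ n) y := fun y =>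
    (hasDerivAt_series hd2 y).const_mul C
  have hderiv1 : deriv (fun y => C * F α y) = fun y => C * ∑' n, d1 α n * y ^ n :=
    funext fun y => (h1 y).deriv
  have hderiv2 : deriv (deriv (fun y => C * F α y))
      = fun y => C * ∑' n, d2 α n * y ^ n := by
    rw [hderiv1]
    exact funext fun y => (h2 y).deriv
  constructor
  · have h21 : (2 : WithTop ℕ∞) = 1 + 1 := by norm_num
    rw [h21, contDiff_succ_iff_deriv]
    refine ⟨fun y => (h1 y).differentiableAt, ?_, ?_⟩
    · intro h; simp at h
    · rw [hderiv1, contDiff_one_iff_deriv]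
      refine ⟨fun y => (h2 y).differentiableAt, ?_⟩
      have : deriv (fun y => C * ∑' n, d1 α n * y ^ n)
          = fun y => C * ∑' n, d2 α n * y ^ n := funext fun y => (h2 y).deriv
      rw [this]
      exact Differentiable.continuous (fun y => (h3 y).differentiableAt)
  · intro y
    rw [hderiv2, hderiv1, F_eq]
    have key := ode_key α hα' y
    linear_combination C * key
end

section
/- Let 0 < α < 1/2, set γ(α) = α/(2α−1) and z(y,α) = y²(2α−1)/2, and let F(y,α) = y·M(γ(α), 3/2, z(y,α)) + [Γ(1−γ(α)) / (√(2(1−2α))·Γ(3/2−γ(α)))]·M(γ(α)−1/2, 1/2, z(y,α)). Then F(y,α) → 0 as y → −∞. -/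
open Real Filter Polynomial

open Finset MeasureTheory Set

noncomputable def pch (n : ℕ) (x : ℝ) : ℝ := (ascPochhammer ℝ n).eval x

lemma pch_zero (x : ℝ) : pch 0 x = 1 := by simp [pch]
lemma pch_succ (n : ℕ) (x : ℝ) : pch (n+1) x = pch n x * (x + n) := ascPochhammer_succ_eval n x
lemma pch_succ_left (n : ℕ) (x : ℝ) : pch (n+1) x = x * pch n (x+1) := by
  unfold pch; rw [ascPochhammer_succ_left]; simp [eval_comp]
lemma pch_add (n m : ℕ) (x : ℝ) : pch (n+m) x = pch n x * pch m (x + n) := by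
  unfold pch; rw [← ascPochhammer_mul]; simp [eval_comp]
lemma pch_pos {x : ℝ} (hx : 0 < x) (n : ℕ) : 0 < pch n x := ascPochhammer_pos n x hx
lemma pch_mono {x y : ℝ} (hx : 0 < x) (hxy : x ≤ y) (n : ℕ) : pch n x ≤ pch n y := by
  induction n with
  | zero => simp [pch_zero]
  | succ n ih =>
    rw [pch_succ, pch_succ]
    have h1 := pch_pos hx n
    have h2 : (0:ℝ) < x + n := by positivity
    have h3 : (0:ℝ) ≤ pch n y := le_trans h1.le ih
    have h4 : x + (n:ℝ) ≤ y + n := by linarith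
    exact mul_le_mul ih h4 h2.le h3

lemma abs_pch_le (c : ℝ) (n : ℕ) : |pch n c| ≤ pch n |c| := by
  induction n with
  | zero => simp [pch_zero]
  | succ n ih =>
    rw [pch_succ, pch_succ, abs_mul]
    have h : |c + (n:ℝ)| ≤ |c| + n := (abs_add_le _ _).trans (by simp)
    have h0 : (0:ℝ) ≤ pch n |c| := by
      rcases eq_or_lt_of_le (abs_nonneg c) with hc | hc
      · exact le_trans (abs_nonneg _) (ih.trans_eq (by rw [← hc]))
      · exact (pch_pos hc n).le
    exact mul_le_mul ih h (abs_nonneg _) h0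

-- β n! ≤ pch (n+1) β
lemma pch_ge_fact {β : ℝ} (hβ : 0 < β) (n : ℕ) : β * n.factorial ≤ pch (n+1) β := by
  induction n with
  | zero => simp [pch_succ, pch_zero]
  | succ n ih =>
    rw [pch_succ]
    have h1 : (n:ℝ)+1 ≤ β + (n+1) := by push_cast; linarith
    have h2 : 0 < pch (n+1) β := pch_pos hβ (n+1)
    calc β * (n+1).factorial = (β * n.factorial) * (n+1) := by
          push_cast [Nat.factorial_succ]; ring
      _ ≤ pch (n+1) β * (n+1) := by
          apply mul_le_mul_of_nonneg_right ih (by positivity)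
      _ ≤ pch (n+1) β * (β + (n+1)) := by
          apply mul_le_mul_of_nonneg_left _ h2.le
          push_cast; linarith
      _ = pch (n+1) β * (β + (↑(n+1))) := by push_cast; ring

lemma fact_le_pch {β : ℝ} (hβ : 0 < β) (n : ℕ) :
    min β 1 * n.factorial ≤ (n+1) * pch n β := by
  cases n with
  | zero => simp [pch_zero]
  | succ m =>
    have h := pch_ge_fact hβ m
    have h2 : min β 1 ≤ β := min_le_left _ _
    calc min β 1 * (m+1).factorial ≤ β * (m+1).factorial := by
          apply mul_le_mul_of_nonneg_right h2 (by positivity)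
      _ = (β * m.factorial) * (m+1) := by push_cast [Nat.factorial_succ]; ring
      _ ≤ pch (m+1) β * (m+1) := mul_le_mul_of_nonneg_right h (by positivity)
      _ ≤ (m+1+1) * pch (m+1) β := by
          rw [mul_comm]
          apply mul_le_mul_of_nonneg_right _ (pch_pos hβ (m+1)).le
          push_cast; linarith
      _ = (↑(m+1)+1) * pch (m+1) β := by push_cast; ring

lemma summable_aux {d r : ℝ} (hd : 1 ≤ d) (hr : 0 < r) :
    Summable (fun n : ℕ => (n+1) * pch n d * r^n / (n.factorial * n.factorial)) := by
  have hd0 : (0:ℝ) < d := by linarith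
  set f : ℕ → ℝ := fun n => (n+1) * pch n d * r^n / (n.factorial * n.factorial) with hf
  have hfpos : ∀ n, 0 < f n := fun n => by
    have := pch_pos hd0 n
    have : (0:ℝ) < (n:ℝ)+1 := by positivity
    positivity
  apply summable_of_ratio_test_tendsto_lt_one (l := 0) one_pos
  · exact Eventually.of_forall fun n => (hfpos n).ne'
  · have key : ∀ n : ℕ, ‖f (n+1)‖ / ‖f n‖ =
        (1 + 1/(n+1)) * (1 + (d-1) * (1/(n+1))) * (r * (1/(n+1))) := by
      intro n
      rw [Real.norm_of_nonneg (hfpos (n+1)).le, Real.norm_of_nonneg (hfpos n).le]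
      have h1 : pch (n+1) d = pch n d * (d + n) := pch_succ n d
      have hp := pch_pos hd0 n
      have hfn : (0:ℝ) < (n.factorial : ℝ) := by positivity
      have hn1 : (0:ℝ) < (n:ℝ)+1 := by positivity
      have hn2 : (0:ℝ) < (n:ℝ)+2 := by positivity
      rw [hf]
      simp only [Nat.factorial_succ]
      push_cast [h1]
      field_simp
      ring
    rw [show (0:ℝ) = (1+0)*(1+(d-1)*0)*(r*0) by ring]
    apply Tendsto.congr (fun n => (key n).symm)
    apply Tendsto.mul
    apply Tendsto.mul
    · exact tendsto_const_nhds.add tendsto_one_div_add_atTop_nhds_zero_nat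
    · exact tendsto_const_nhds.add (tendsto_const_nhds.mul tendsto_one_div_add_atTop_nhds_zero_nat)
    · exact tendsto_const_nhds.mul tendsto_one_div_add_atTop_nhds_zero_nat

lemma summable_M_norm (c β z : ℝ) (hβ : 0 < β) :
    Summable (fun n : ℕ => ‖pch n c * z^n / (pch n β * n.factorial)‖) := by
  set m := min β 1 with hm
  have hm0 : 0 < m := lt_min hβ one_pos
  have hd : (0:ℝ) < |c|+1 := by positivity
  refine Summable.of_nonneg_of_le (fun n => norm_nonneg _) (fun n => ?_)
    (((summable_aux (d := |c|+1) (r := |z|+1) (by simp) (by positivity)).mul_left (1/m)))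
  have hfn : (0:ℝ) < (n.factorial : ℝ) := by positivity
  have hpb := pch_pos hβ n
  have hpd := pch_pos hd n
  have hn1 : (0:ℝ) < (n:ℝ)+1 := by positivity
  have hA : |pch n c| * |z|^n ≤ pch n (|c|+1) * (|z|+1)^n := by
    apply mul_le_mul ((abs_pch_le c n).trans ?_) (pow_le_pow_left₀ (abs_nonneg z) (by linarith) n)
      (by positivity) hpd.le
    rcases eq_or_lt_of_le (abs_nonneg c) with hc | hc
    · rcases n with _ | k
      · simp [pch_zero]
      · have h0 : pch (k+1) |c| = 0 := by rw [← hc, pch_succ_left, zero_mul]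
        rw [h0]
        exact (pch_pos hd (k+1)).le
    · exact pch_mono hc (by linarith) n
  have hB : m * n.factorial ≤ (n+1) * pch n β := fact_le_pch hβ n
  have hnorm : ‖pch n c * z^n / (pch n β * n.factorial)‖
      = |pch n c| * |z|^n / (pch n β * n.factorial) := by
    rw [Real.norm_eq_abs, abs_div, abs_mul, abs_mul, abs_pow, abs_of_pos hpb, abs_of_pos hfn]
  rw [hnorm, show (1/m) * ((↑n+1) * pch n (|c|+1) * (|z|+1)^n / (↑n.factorial * ↑n.factorial))
      = ((↑n+1) * pch n (|c|+1) * (|z|+1)^n) / (m * (↑n.factorial * ↑n.factorial)) by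
        field_simp]
  rw [div_le_div_iff₀ (by positivity) (by positivity)]
  calc |pch n c| * |z| ^ n * (m * (↑n.factorial * ↑n.factorial))
      = (|pch n c| * |z| ^ n) * (m * ↑n.factorial) * ↑n.factorial := by ring
    _ ≤ (pch n (|c|+1) * (|z|+1)^n) * ((↑n+1) * pch n β) * ↑n.factorial := by
        apply mul_le_mul_of_nonneg_right _ hfn.le
        exact mul_le_mul hA hB (by positivity) (by positivity)
    _ = (↑n+1) * pch n (|c|+1) * (|z|+1) ^ n * (pch n β * ↑n.factorial) := by ring

lemma first_sum (n : ℕ) (b c : ℝ)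
    (ih : ∀ b c : ℝ, ∑ k ∈ range (n+1), (-1:ℝ)^k * (n.choose k) * pch k c * pch (n-k) (b+k) = pch n (b-c)) :
    ∑ k ∈ range (n+2), (-1:ℝ)^k * (n.choose k) * pch k c * pch (n+1-k) (b+k)
      = (b+n) * pch n (b-c) := by
  rw [Finset.sum_range_succ]
  have hlast : ((n.choose (n+1) : ℕ) : ℝ) = 0 := by
    rw [Nat.choose_eq_zero_of_lt (Nat.lt_succ_self n)]; simp
  rw [hlast]
  have hstep : ∀ k ∈ range (n+1), (-1:ℝ)^k * (n.choose k) * pch k c * pch (n+1-k) (b+k)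
      = ((-1:ℝ)^k * (n.choose k) * pch k c * pch (n-k) (b+k)) * (b+n) := by
    intro k hk
    rw [Finset.mem_range] at hk
    have hkn : k ≤ n := Nat.lt_succ_iff.mp hk
    have h1 : n + 1 - k = (n-k) + 1 := by omega
    rw [h1, pch_succ]
    have h2 : (b + (k:ℝ)) + ((n-k:ℕ):ℝ) = b + n := by
      rw [Nat.cast_sub hkn]; ring
    rw [h2]; ring
  rw [Finset.sum_congr rfl hstep, ← Finset.sum_mul, ih b c]
  ring

lemma vandermonde (n : ℕ) : ∀ b c : ℝ,
    ∑ k ∈ range (n+1), (-1:ℝ)^k * (n.choose k) * pch k c * pch (n-k) (b+k) = pch n (b-c) := by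
  induction n with
  | zero => intro b c; simp [pch_zero]
  | succ n ih =>
    intro b c
    have peelA : ∑ k ∈ range (n+1+1), (-1:ℝ)^k * ((n+1).choose k) * pch k c * pch (n+1-k) (b+k)
        = (∑ j ∈ range (n+1), (-1:ℝ)^(j+1) * ((n+1).choose (j+1)) * pch (j+1) c * pch (n+1-(j+1)) (b+((j+1:ℕ):ℝ)))
          + (-1:ℝ)^(0:ℕ) * (((n+1).choose 0 : ℕ):ℝ) * pch 0 c * pch (n+1-0) (b+((0:ℕ):ℝ)) :=
      Finset.sum_range_succ' _ (n+1)
    have peelB : ∑ k ∈ range (n+1+1), (-1:ℝ)^k * (n.choose k) * pch k c * pch (n+1-k) (b+k)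
        = (∑ j ∈ range (n+1), (-1:ℝ)^(j+1) * ((n.choose (j+1) : ℕ):ℝ) * pch (j+1) c * pch (n+1-(j+1)) (b+((j+1:ℕ):ℝ)))
          + (-1:ℝ)^(0:ℕ) * ((n.choose 0 : ℕ):ℝ) * pch 0 c * pch (n+1-0) (b+((0:ℕ):ℝ)) :=
      Finset.sum_range_succ' _ (n+1)
    have hsplit : ∀ j ∈ range (n+1),
        (-1:ℝ)^(j+1) * ((n+1).choose (j+1)) * pch (j+1) c * pch (n+1-(j+1)) (b+((j+1:ℕ):ℝ))
        = (-c) * ((-1:ℝ)^j * (n.choose j) * pch j (c+1) * pch (n-j) ((b+1)+j))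
          + (-1:ℝ)^(j+1) * ((n.choose (j+1) : ℕ):ℝ) * pch (j+1) c * pch (n+1-(j+1)) (b+((j+1:ℕ):ℝ)) := by
      intro j hj
      rw [Nat.choose_succ_succ n j]
      have h1 : pch (j+1) c = c * pch j (c+1) := pch_succ_left j c
      have h2 : n + 1 - (j+1) = n - j := by omega
      have h3 : (b + ((j+1:ℕ):ℝ)) = (b+1) + j := by push_cast; ring
      rw [h2, h1, h3]
      push_cast
      ring
    rw [peelA, Finset.sum_congr rfl hsplit, Finset.sum_add_distrib]
    have piece1 : ∑ j ∈ range (n+1), (-c) * ((-1:ℝ)^j * (n.choose j) * pch j (c+1) * pch (n-j) ((b+1)+j))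
        = -c * pch n (b-c) := by
      rw [← Finset.mul_sum, ih (b+1) (c+1)]
      norm_num
    have piece2 : (∑ j ∈ range (n+1), (-1:ℝ)^(j+1) * ((n.choose (j+1) : ℕ):ℝ) * pch (j+1) c * pch (n+1-(j+1)) (b+((j+1:ℕ):ℝ)))
        + (-1:ℝ)^(0:ℕ) * ((n.choose 0 : ℕ):ℝ) * pch 0 c * pch (n+1-0) (b+((0:ℕ):ℝ))
        = (b+n) * pch n (b-c) := by
      rw [← peelB]
      exact first_sum n b c ih
    have hA0 : (-1:ℝ)^(0:ℕ) * (((n+1).choose 0 : ℕ):ℝ) * pch 0 c * pch (n+1-0) (b+((0:ℕ):ℝ))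
        = (-1:ℝ)^(0:ℕ) * ((n.choose 0 : ℕ):ℝ) * pch 0 c * pch (n+1-0) (b+((0:ℕ):ℝ)) := by
      norm_num
    rw [piece1, hA0, pch_succ]
    linear_combination piece2

lemma M_eq_tsum (a β z : ℝ) : M a β z = ∑' n : ℕ, pch n a * z^n / (pch n β * n.factorial) := rfl

lemma kummer (a β z : ℝ) (hβ : 0 < β) : M a β z = Real.exp z * M (β - a) β (-z) := by
  have hf : Summable fun k : ℕ => ‖z^k / (k.factorial : ℝ)‖ := by
    apply Summable.of_nonneg_of_le (fun n => norm_nonneg _)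
      (fun n => ?_) (Real.summable_pow_div_factorial |z|)
    rw [Real.norm_eq_abs, abs_div, abs_pow, Nat.abs_cast]
  have hg : Summable fun n : ℕ => ‖pch n (β - a) * (-z)^n / (pch n β * n.factorial)‖ :=
    summable_M_norm _ _ _ hβ
  have key : ∀ n : ℕ, ∑ k ∈ range (n+1),
      (z^k / (k.factorial : ℝ)) * (pch (n-k) (β-a) * (-z)^(n-k) / (pch (n-k) β * ((n-k).factorial : ℝ)))
      = pch n a * z^n / (pch n β * n.factorial) := by
    intro n
    have hv := vandermonde n β (β - a)
    rw [show β - (β - a) = a by ring] at hv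
    set f : ℕ → ℝ := fun j => ((-1:ℝ)^j * (n.choose j) * pch j (β-a) * pch (n-j) (β+j))
        * (z^n / (pch n β * n.factorial)) with hfdef
    have termwise : ∀ k ∈ range (n+1),
        (z^k / (k.factorial : ℝ)) * (pch (n-k) (β-a) * (-z)^(n-k) / (pch (n-k) β * ((n-k).factorial : ℝ)))
        = f (n - k) := by
      intro k hk
      rw [Finset.mem_range] at hk
      have hkn : k ≤ n := Nat.lt_succ_iff.mp hk
      have hnk : n - (n - k) = k := by omega
      have hchoose : ((n.choose (n-k) : ℕ) : ℝ) = (n.choose k : ℕ) := by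
        rw [Nat.choose_symm hkn]
      have hB : pch n β = pch (n-k) β * pch k (β + ((n-k:ℕ):ℝ)) := by
        rw [← pch_add]; congr 1; omega
      have hfac : ((n.factorial : ℕ) : ℝ) = (n.choose k : ℕ) * (k.factorial : ℕ) * ((n-k).factorial : ℕ) := by
        rw [← Nat.cast_mul, ← Nat.cast_mul, Nat.choose_mul_factorial_mul_factorial hkn]
      have hneg : (-z)^(n-k) = (-1:ℝ)^(n-k) * z^(n-k) := by
        rw [neg_pow]
      have hz : z^k * z^(n-k) = z^n := by
        rw [← pow_add]; congr 1; omega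
      have hb1 : (0:ℝ) < pch (n-k) β := pch_pos hβ _
      have hb2 : (0:ℝ) < pch k (β + ((n-k:ℕ):ℝ)) := pch_pos (by positivity) _
      have hfk : (0:ℝ) < (k.factorial : ℝ) := by positivity
      have hfnk : (0:ℝ) < ((n-k).factorial : ℝ) := by positivity
      have hchoosepos : (0:ℝ) < (n.choose k : ℝ) := by
        have := Nat.choose_pos hkn; positivity
      rw [hfdef]
      simp only [hnk]
      rw [hneg, hchoose]
      rw [div_mul_div_comm,
        show ((-1:ℝ)^(n-k) * ((n.choose k : ℕ):ℝ) * pch (n-k) (β-a) * pch k (β + ((n-k:ℕ):ℝ)))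
            * (z^n / (pch n β * (n.factorial:ℝ)))
          = (((-1:ℝ)^(n-k) * ((n.choose k : ℕ):ℝ) * pch (n-k) (β-a) * pch k (β + ((n-k:ℕ):ℝ))) * z^n)
            / (pch n β * (n.factorial:ℝ)) from (mul_div_assoc _ _ _).symm]
      rw [div_eq_div_iff (mul_pos hfk (mul_pos hb1 hfnk)).ne' (mul_pos (pch_pos hβ n) (by positivity : (0:ℝ) < (n.factorial:ℝ))).ne']
      rw [hB, hfac, ← hz]
      ring
    rw [Finset.sum_congr rfl termwise]
    have hreflect := Finset.sum_range_reflect f (n+1)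
    simp only [Nat.add_sub_cancel] at hreflect
    rw [hreflect, hfdef, ← Finset.sum_mul, hv, mul_div_assoc]
  have hexp : Real.exp z = ∑' k : ℕ, z^k / (k.factorial : ℝ) := by
    rw [Real.exp_eq_exp_ℝ, NormedSpace.exp_eq_tsum_div]
  rw [M_eq_tsum, M_eq_tsum, hexp,
    tsum_mul_tsum_eq_tsum_sum_range_of_summable_norm hf hg]
  exact tsum_congr fun n => (key n).symm

lemma gauss_moment {s : ℝ} (hs : -1 < s) :
    ∫ t in Ioi (0:ℝ), t ^ s * Real.exp (-(t^2/2)) = 2 ^ ((s-1)/2) * Real.Gamma ((s+1)/2) := by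
  have key := integral_comp_rpow_Ioi_of_pos
    (g := fun y : ℝ => (1/2 : ℝ) * (y ^ ((s-1)/2) * Real.exp (-(1/2 * y)))) (p := 2) two_pos
  have heq : ∀ x ∈ Ioi (0:ℝ), ((2:ℝ) * x ^ ((2:ℝ) - 1)) • ((1/2 : ℝ) * ((x ^ (2:ℝ)) ^ ((s-1)/2) * Real.exp (-(1/2 * x ^ (2:ℝ)))))
      = x ^ s * Real.exp (-(x^2/2)) := by
    intro x hx
    rw [Set.mem_Ioi] at hx
    have hx0 : (0:ℝ) ≤ x := hx.le
    have hxp : x ^ (2:ℝ) = x^(2:ℕ) := by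
      rw [← Real.rpow_natCast x 2]; norm_num
    have hsq : (x^(2:ℕ)) ^ ((s-1)/2) = x ^ (s-1) := by
      rw [← Real.rpow_natCast x 2, ← Real.rpow_mul hx0]
      congr 1
      push_cast
      ring
    rw [hxp, hsq, smul_eq_mul, show (2:ℝ)-1 = 1 by norm_num, Real.rpow_one]
    have hxs : x ^ s = x * x^(s-1) := by
      rw [show s = 1 + (s-1) by ring, Real.rpow_add hx, Real.rpow_one]
      ring_nf
    rw [hxs, show (1/2 * x^(2:ℕ) : ℝ) = x^2/2 by ring]
    ring
  have hg : ∫ y in Ioi (0:ℝ), (1/2 : ℝ) * (y ^ ((s-1)/2) * Real.exp (-(1/2 * y)))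
      = 2 ^ ((s-1)/2) * Real.Gamma ((s+1)/2) := by
    rw [MeasureTheory.integral_const_mul]
    have hval := Real.integral_rpow_mul_exp_neg_mul_Ioi (a := (s+1)/2) (r := 1/2)
      (by linarith) (by norm_num)
    rw [show (s-1)/2 = (s+1)/2 - 1 by ring, hval]
    rw [show (1/(1/2):ℝ) = 2 by norm_num]
    rw [show (s+1)/2 = ((s+1)/2 - 1) + 1 by ring, Real.rpow_add two_pos, Real.rpow_one]
    ring_nf
  calc ∫ t in Ioi (0:ℝ), t ^ s * Real.exp (-(t^2/2))
      = ∫ x in Ioi (0:ℝ), ((2:ℝ) * x ^ ((2:ℝ) - 1)) • ((1/2 : ℝ) * ((x ^ (2:ℝ)) ^ ((s-1)/2) * Real.exp (-(1/2 * x ^ (2:ℝ))))) :=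
        (setIntegral_congr_fun measurableSet_Ioi heq).symm
    _ = ∫ y in Ioi (0:ℝ), (1/2 : ℝ) * (y ^ ((s-1)/2) * Real.exp (-(1/2 * y))) := key
    _ = 2 ^ ((s-1)/2) * Real.Gamma ((s+1)/2) := hg

lemma Gamma_pch {x : ℝ} (hx : 0 < x) (n : ℕ) : Real.Gamma (x + n) = Real.Gamma x * pch n x := by
  induction n with
  | zero => simp [pch_zero]
  | succ n ih =>
    have : x + ((n+1 : ℕ):ℝ) = (x + n) + 1 := by push_cast; ring
    rw [this, Real.Gamma_add_one (by positivity), ih, pch_succ]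
    ring

noncomputable def gm (ν : ℝ) (n : ℕ) : ℝ := 2 ^ ((ν+n-2)/2) * Real.Gamma ((ν+n)/2)

lemma gm_pos {ν : ℝ} (hν : 0 < ν) (n : ℕ) : 0 < gm ν n := by
  have h1 : 0 < (ν+n)/2 := by positivity
  have := Real.Gamma_pos_of_pos h1
  unfold gm; positivity

lemma gm_even {ν : ℝ} (hν : 0 < ν) (m : ℕ) :
    gm ν (2*m) = gm ν 0 * (2:ℝ)^m * pch m (ν/2) := by
  unfold gm
  have h1 : ((2*m : ℕ):ℝ) = 2*(m:ℝ) := by push_cast; ring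
  rw [h1, show (ν+2*(m:ℝ))/2 = ν/2 + m by ring, Gamma_pch (by positivity) m]
  rw [show (ν+2*(m:ℝ)-2)/2 = (ν+(0:ℕ)-2)/2 + m by push_cast; ring]
  rw [Real.rpow_add two_pos, Real.rpow_natCast]
  push_cast
  ring

lemma gm_odd {ν : ℝ} (hν : 0 < ν) (m : ℕ) :
    gm ν (2*m+1) = gm ν 1 * (2:ℝ)^m * pch m ((ν+1)/2) := by
  unfold gm
  have h1 : ((2*m+1 : ℕ):ℝ) = 2*(m:ℝ)+1 := by push_cast; ring
  rw [h1, show (ν+(2*(m:ℝ)+1))/2 = (ν+1)/2 + m by ring, Gamma_pch (by positivity) m]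
  rw [show (ν+(2*(m:ℝ)+1)-2)/2 = (ν+(1:ℕ)-2)/2 + m by push_cast; ring]
  rw [Real.rpow_add two_pos, Real.rpow_natCast]
  push_cast
  ring

lemma fact_sq_le_two_mul (m : ℕ) : ((m.factorial : ℝ) * m.factorial) ≤ ((2*m).factorial : ℝ) := by
  have h := Nat.choose_mul_factorial_mul_factorial (show m ≤ 2*m by omega)
  have h2 : 1 ≤ (2*m).choose m := Nat.choose_pos (show m ≤ 2*m by omega)
  have : m.factorial * m.factorial ≤ (2*m).factorial := by
    calc m.factorial * m.factorial = 1 * (m.factorial * m.factorial) := by ring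
      _ ≤ (2*m).choose m * (m.factorial * ((2*m - m).factorial)) := by
          rw [show 2*m - m = m by omega]
          exact Nat.mul_le_mul h2 (le_refl _)
      _ = (2*m).factorial := by rw [← h]; ring
  exact_mod_cast this

lemma le_helper {g p q e : ℝ} (hg : 0 < g) (m : ℕ) (hpq : p ≤ q) (hp : 0 < p) (hq : 0 < q) (he : 0 ≤ e) :
    g * (e * p) ≤ g * ((↑m+1) * q * e) := by
  apply mul_le_mul_of_nonneg_left _ hg.le
  have h1 : e * p ≤ e * q := mul_le_mul_of_nonneg_left hpq he
  have h2 : (0:ℝ) ≤ (m:ℝ) * q * e := by positivity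
  nlinarith

set_option maxHeartbeats 1000000 in
lemma summable_gm_series {ν b : ℝ} (hν : 0 < ν) (hb : 0 < b) :
    Summable (fun n : ℕ => b^n / n.factorial * gm ν n) := by
  have hg0 := gm_pos hν 0
  have hg1 := gm_pos hν 1
  have hd1 : (1:ℝ) ≤ ν/2+1 := by linarith
  have hd2 : (1:ℝ) ≤ (ν+1)/2+1 := by linarith
  have hr : (0:ℝ) < 2*b^2 := by positivity
  have hE : Summable (fun m : ℕ => b^(2*m) / ((2*m).factorial:ℝ) * gm ν (2*m)) := by
    have hsumE : Summable (fun m : ℕ => gm ν 0 * ((↑m+1) * pch m (ν/2+1) * (2*b^2)^m / (↑m.factorial * ↑m.factorial))) :=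
      (summable_aux hd1 hr).mul_left _
    have hnonnegE : ∀ m : ℕ, 0 ≤ b^(2*m) / ((2*m).factorial:ℝ) * gm ν (2*m) := by
      intro m
      have h := (gm_pos hν (2*m)).le
      positivity
    refine Summable.of_nonneg_of_le hnonnegE (fun m => ?_) hsumE
    have hp : (2*b^2)^m = 2^m * b^(2*m) := by rw [mul_pow, pow_mul]
    have hfpos : (0:ℝ) < (m.factorial:ℝ) * m.factorial := by positivity
    have hfle := fact_sq_le_two_mul m
    have hpm := pch_pos (show (0:ℝ) < ν/2 by positivity) m
    have hpm1 := pch_pos (show (0:ℝ) < ν/2+1 by positivity) m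
    have hmono := pch_mono (show (0:ℝ) < ν/2 by positivity) (by linarith : ν/2 ≤ ν/2+1) m
    have e1 : b^(2*m)/(((2*m).factorial:ℕ):ℝ) * gm ν (2*m)
        = gm ν 0 * ((2*b^2)^m * pch m (ν/2)) / (((2*m).factorial:ℕ):ℝ) := by
      rw [gm_even hν m, hp]; ring
    rw [e1, show gm ν 0 * ((↑m+1) * pch m (ν/2+1) * (2*b^2)^m / (↑m.factorial * ↑m.factorial))
        = gm ν 0 * ((↑m+1) * pch m (ν/2+1) * (2*b^2)^m) / ((m.factorial:ℝ) * m.factorial) by ring]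
    apply div_le_div₀ (by positivity) _ hfpos hfle
    exact le_helper hg0 m hmono hpm hpm1 (by positivity)
  have hO : Summable (fun m : ℕ => b^(2*m+1) / ((2*m+1).factorial:ℝ) * gm ν (2*m+1)) := by
    have hsumO : Summable (fun m : ℕ => (gm ν 1 * b) * ((↑m+1) * pch m ((ν+1)/2+1) * (2*b^2)^m / (↑m.factorial * ↑m.factorial))) :=
      (summable_aux hd2 hr).mul_left _
    have hnonnegO : ∀ m : ℕ, 0 ≤ b^(2*m+1) / ((2*m+1).factorial:ℝ) * gm ν (2*m+1) := by
      intro m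
      have h := (gm_pos hν (2*m+1)).le
      positivity
    refine Summable.of_nonneg_of_le hnonnegO (fun m => ?_) hsumO
    have hp : (2*b^2)^m = 2^m * b^(2*m) := by rw [mul_pow, pow_mul]
    have hfpos : (0:ℝ) < (m.factorial:ℝ) * m.factorial := by positivity
    have hfle : ((m.factorial:ℝ) * m.factorial) ≤ (((2*m+1).factorial:ℕ):ℝ) := by
      refine (fact_sq_le_two_mul m).trans ?_
      exact_mod_cast Nat.factorial_le (show 2*m ≤ 2*m+1 by omega)
    have hpm := pch_pos (show (0:ℝ) < (ν+1)/2 by positivity) m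
    have hpm1 := pch_pos (show (0:ℝ) < (ν+1)/2+1 by positivity) m
    have hmono := pch_mono (show (0:ℝ) < (ν+1)/2 by positivity) (by linarith : (ν+1)/2 ≤ (ν+1)/2+1) m
    have e1 : b^(2*m+1)/(((2*m+1).factorial:ℕ):ℝ) * gm ν (2*m+1)
        = (gm ν 1 * b) * ((2*b^2)^m * pch m ((ν+1)/2)) / (((2*m+1).factorial:ℕ):ℝ) := by
      rw [gm_odd hν m, hp, pow_succ]; ring
    rw [e1, show (gm ν 1 * b) * ((↑m+1) * pch m ((ν+1)/2+1) * (2*b^2)^m / (↑m.factorial * ↑m.factorial))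
        = (gm ν 1 * b) * ((↑m+1) * pch m ((ν+1)/2+1) * (2*b^2)^m) / ((m.factorial:ℝ) * m.factorial) by ring]
    apply div_le_div₀ (by positivity) _ hfpos hfle
    exact le_helper (by positivity) m hmono hpm hpm1 (by positivity)
  exact (hE.hasSum.even_add_odd hO.hasSum).summable

set_option maxHeartbeats 1000000 in
lemma int_series {ν b : ℝ} (hν : 0 < ν) (hb : 0 < b) :
    ∫ t in Ioi (0:ℝ), t ^ (ν-1) * Real.exp (-(t^2/2)) * Real.exp (-(b*t))
      = ∑' n : ℕ, (-b)^n / n.factorial * gm ν n := by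
  set F : ℕ → ℝ → ℝ := fun n t => t ^ (ν-1) * Real.exp (-(t^2/2)) * ((-(b*t))^n / n.factorial)
    with hF
  have hcast : ∀ n : ℕ, (-1:ℝ) < ν-1+n := fun n => by
    have : (0:ℝ) ≤ n := Nat.cast_nonneg n
    linarith
  have hFeq : ∀ n : ℕ, ∀ t ∈ Ioi (0:ℝ), F n t
      = ((-b)^n / n.factorial) * (t ^ (ν-1+n) * Real.exp (-(t^2/2))) := by
    intro n t ht
    rw [Set.mem_Ioi] at ht
    rw [hF]
    simp only
    rw [Real.rpow_add ht, Real.rpow_natCast, show -(b*t) = (-b)*t by ring, mul_pow]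
    ring
  have hint : ∀ n : ℕ, IntegrableOn (fun t : ℝ => t ^ (ν-1+n) * Real.exp (-(t^2/2))) (Ioi 0) := by
    intro n
    refine (integrableOn_rpow_mul_exp_neg_mul_sq one_half_pos (hcast n)).congr_fun
      (fun t ht => ?_) measurableSet_Ioi
    beta_reduce
    rw [show (-(1/2:ℝ) * t^2) = -(t^2/2) by ring]
  have hFi : ∀ n : ℕ, IntegrableOn (F n) (Ioi (0:ℝ)) := by
    intro n
    have h2 : IntegrableOn (fun t : ℝ => ((-b)^n / (n.factorial:ℝ)) * (t ^ (ν-1+n) * Real.exp (-(t^2/2)))) (Ioi 0) :=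
      (hint n).const_mul _
    exact h2.congr_fun (fun t ht => (hFeq n t ht).symm) measurableSet_Ioi
  have hFnorm : ∀ n : ℕ, ∫ t in Ioi (0:ℝ), ‖F n t‖ = b^n / n.factorial * gm ν n := by
    intro n
    have heq : ∀ t ∈ Ioi (0:ℝ), ‖F n t‖ = (b^n / n.factorial) * (t ^ (ν-1+n) * Real.exp (-(t^2/2))) := by
      intro t ht
      rw [hFeq n t ht]
      rw [Set.mem_Ioi] at ht
      rw [Real.norm_eq_abs, abs_mul, abs_div, abs_pow, abs_neg, abs_of_pos hb, Nat.abs_cast,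
        abs_mul, abs_of_nonneg (Real.rpow_nonneg ht.le _), abs_of_pos (Real.exp_pos _)]
    rw [setIntegral_congr_fun measurableSet_Ioi heq, MeasureTheory.integral_const_mul,
      gauss_moment (hcast n)]
    unfold gm
    rw [show (ν-1+n-1)/2 = (ν+n-2)/2 by ring, show (ν-1+n+1)/2 = (ν+n)/2 by ring]
  have hFval : ∀ n : ℕ, ∫ t in Ioi (0:ℝ), F n t = (-b)^n / n.factorial * gm ν n := by
    intro n
    rw [setIntegral_congr_fun measurableSet_Ioi (hFeq n), MeasureTheory.integral_const_mul,
      gauss_moment (hcast n)]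
    unfold gm
    rw [show (ν-1+n-1)/2 = (ν+n-2)/2 by ring, show (ν-1+n+1)/2 = (ν+n)/2 by ring]
  have hsum : Summable (fun n : ℕ => ∫ t in Ioi (0:ℝ), ‖F n t‖) := by
    rw [show (fun n : ℕ => ∫ t in Ioi (0:ℝ), ‖F n t‖) = fun n : ℕ => b^n / n.factorial * gm ν n
      from funext hFnorm]
    exact summable_gm_series hν hb
  have swap := MeasureTheory.integral_tsum_of_summable_integral_norm hFi hsum
  have hpt : ∀ t ∈ Ioi (0:ℝ), (∑' n : ℕ, F n t)
      = t ^ (ν-1) * Real.exp (-(t^2/2)) * Real.exp (-(b*t)) := by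
    intro t ht
    rw [hF]
    simp only
    rw [tsum_mul_left]
    congr 1
    rw [Real.exp_eq_exp_ℝ, NormedSpace.exp_eq_tsum_div]
  calc ∫ t in Ioi (0:ℝ), t ^ (ν-1) * Real.exp (-(t^2/2)) * Real.exp (-(b*t))
      = ∫ t in Ioi (0:ℝ), (∑' n : ℕ, F n t) := (setIntegral_congr_fun measurableSet_Ioi hpt).symm
    _ = ∑' n : ℕ, ∫ t in Ioi (0:ℝ), F n t := swap.symm
    _ = ∑' n : ℕ, (-b)^n / n.factorial * gm ν n := tsum_congr hFval

lemma fact_two_mul (m : ℕ) : (((2*m).factorial : ℕ):ℝ) = pch m (1/2) * m.factorial * 4^m := by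
  induction m with
  | zero => simp [pch_zero]
  | succ m ih =>
    have h1 : 2*(m+1) = (2*m+1)+1 := by ring
    rw [h1, Nat.factorial_succ, Nat.factorial_succ]
    push_cast
    rw [ih, pch_succ, Nat.factorial_succ]
    push_cast
    ring
lemma fact_two_mul_add_one (m : ℕ) : (((2*m+1).factorial : ℕ):ℝ) = pch m (3/2) * m.factorial * 4^m := by
  induction m with
  | zero => simp [pch_zero]
  | succ m ih =>
    have h1 : 2*(m+1)+1 = ((2*m+1)+1)+1 := by ring
    rw [h1, Nat.factorial_succ, Nat.factorial_succ]
    push_cast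
    rw [ih, pch_succ, Nat.factorial_succ]
    push_cast
    ring

set_option maxHeartbeats 2000000 in
lemma tsum_gm_eq {ν b : ℝ} (hν : 0 < ν) (hb : 0 < b) :
    ∑' n : ℕ, (-b)^n / n.factorial * gm ν n
      = gm ν 0 * M (ν/2) (1/2) (b^2/2) - b * gm ν 1 * M ((ν+1)/2) (3/2) (b^2/2) := by
  have habs : Summable (fun n : ℕ => (-b)^n / n.factorial * gm ν n) := by
    apply Summable.of_norm
    have : (fun n : ℕ => ‖(-b)^n / n.factorial * gm ν n‖) = fun n : ℕ => b^n / n.factorial * gm ν n := by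
      funext n
      rw [Real.norm_eq_abs, abs_mul, abs_div, abs_pow, abs_neg, abs_of_pos hb, Nat.abs_cast,
        abs_of_pos (gm_pos hν n)]
    rw [this]
    exact summable_gm_series hν hb
  have hE : Summable (fun k : ℕ => (-b)^(2*k) / ((2*k).factorial:ℝ) * gm ν (2*k)) :=
    habs.comp_injective (fun a b h => by omega)
  have hO : Summable (fun k : ℕ => (-b)^(2*k+1) / ((2*k+1).factorial:ℝ) * gm ν (2*k+1)) :=
    habs.comp_injective (fun a b h => by omega)
  rw [← tsum_even_add_odd hE hO]
  have heven : ∀ m : ℕ, (-b)^(2*m) / (((2*m).factorial:ℕ):ℝ) * gm ν (2*m)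
      = gm ν 0 * (pch m (ν/2) * (b^2/2)^m / (pch m (1/2) * m.factorial)) := by
    intro m
    rw [gm_even hν m, fact_two_mul m]
    have h1 : (-b)^(2*m) = (b^2)^m := by rw [pow_mul]; ring_nf
    have h2 : ((b^2/2)^m : ℝ) = (b^2)^m / 2^m := div_pow _ _ _
    have h3 : ((4:ℝ))^m = 2^m * 2^m := by rw [show (4:ℝ) = 2*2 by norm_num, mul_pow]
    rw [h1, h2, h3]
    have hp12 := pch_pos (show (0:ℝ) < 1/2 by norm_num) m
    have hfm : (0:ℝ) < (m.factorial:ℝ) := by positivity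
    have h2m : (0:ℝ) < (2:ℝ)^m := by positivity
    field_simp
  have hodd : ∀ m : ℕ, (-b)^(2*m+1) / (((2*m+1).factorial:ℕ):ℝ) * gm ν (2*m+1)
      = -(b * gm ν 1 * (pch m ((ν+1)/2) * (b^2/2)^m / (pch m (3/2) * m.factorial))) := by
    intro m
    rw [gm_odd hν m, fact_two_mul_add_one m]
    have h1 : (-b)^(2*m+1) = -(b * (b^2)^m) := by
      rw [pow_succ, pow_mul]
      ring_nf
    have h2 : ((b^2/2)^m : ℝ) = (b^2)^m / 2^m := div_pow _ _ _
    have h3 : ((4:ℝ))^m = 2^m * 2^m := by rw [show (4:ℝ) = 2*2 by norm_num, mul_pow]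
    rw [h1, h2, h3]
    have hp32 := pch_pos (show (0:ℝ) < 3/2 by norm_num) m
    have hfm : (0:ℝ) < (m.factorial:ℝ) := by positivity
    have h2m : (0:ℝ) < (2:ℝ)^m := by positivity
    field_simp
  rw [tsum_congr heven, tsum_congr hodd, tsum_mul_left, tsum_neg, tsum_mul_left,
    M_eq_tsum, M_eq_tsum]
  ring

set_option maxHeartbeats 1000000 in
theorem stmt_2 (α : ℝ) (hα : 0 < α) (hα' : α < 1 / 2) :
    Tendsto (fun y => F α y) atBot (nhds 0) := by
  have h2a : 2*α - 1 < 0 := by linarith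
  have h12a : 0 < 1 - 2*α := by linarith
  set γ := α / (2 * α - 1) with hγdef
  have hγ : γ < 0 := div_neg_of_pos_of_neg hα h2a
  set l := Real.sqrt (1 - 2*α) with hldef
  have hl : 0 < l := Real.sqrt_pos.mpr h12a
  have hl2 : l^2 = 1 - 2*α := Real.sq_sqrt h12a.le
  set ν := 2 - 2*γ with hνdef
  have hν : 0 < ν := by simp only [hνdef]; linarith
  have hg1 := gm_pos hν 1
  have hg0 := gm_pos hν 0
  have hν2 : ν/2 = 1 - γ := by simp only [hνdef]; ring
  have hν3 : (ν+1)/2 = 3/2 - γ := by simp only [hνdef]; ring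
  -- gm in Gamma form
  have hgm0 : gm ν 0 = 2 ^ (-γ) * Real.Gamma (1-γ) := by
    unfold gm
    rw [show (ν + ((0:ℕ):ℝ) - 2)/2 = -γ by simp only [hνdef]; push_cast; ring,
      show (ν + ((0:ℕ):ℝ))/2 = 1-γ by simp only [hνdef]; push_cast; ring]
  have hgm1 : gm ν 1 = 2 ^ ((1:ℝ)/2 - γ) * Real.Gamma (3/2-γ) := by
    unfold gm
    rw [show (ν + ((1:ℕ):ℝ) - 2)/2 = (1:ℝ)/2-γ by simp only [hνdef]; push_cast; ring,
      show (ν + ((1:ℕ):ℝ))/2 = 3/2-γ by simp only [hνdef]; push_cast; ring]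
  -- constant identity
  have hΓ1 : 0 < Real.Gamma (1-γ) := Real.Gamma_pos_of_pos (by linarith)
  have hΓ2 : 0 < Real.Gamma (3/2-γ) := Real.Gamma_pos_of_pos (by linarith)
  have hsqrt2 : Real.sqrt (2*(1-2*α)) = 2 ^ ((1:ℝ)/2) * l := by
    rw [Real.sqrt_mul (by norm_num : (0:ℝ) ≤ 2), hldef,
      show Real.sqrt (2:ℝ) = (2:ℝ) ^ ((1:ℝ)/2) from by rw [Real.sqrt_eq_rpow]]
  have h2pos : ∀ x : ℝ, (0:ℝ) < 2 ^ x := fun x => Real.rpow_pos_of_pos two_pos x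
  have hC : Real.Gamma (1-γ) / (Real.sqrt (2*(1-2*α)) * Real.Gamma (3/2-γ))
      = gm ν 0 / (l * gm ν 1) := by
    rw [hgm0, hgm1, hsqrt2]
    have key : (2:ℝ) ^ ((1:ℝ)/2) * 2 ^ (-γ) = 2 ^ ((1:ℝ)/2 - γ) := by
      rw [← Real.rpow_add two_pos]; ring_nf
    rw [div_eq_div_iff (by positivity) (by positivity)]
    linear_combination (-(Real.Gamma (1-γ) * Real.Gamma (3/2-γ) * l)) * key
  -- Kummer rewrites
  have hker : ∀ y : ℝ, y < 0 → F α y = Real.exp (y^2*(2*α-1)/2)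
      * ((∫ t in Ioi (0:ℝ), t ^ (ν-1) * Real.exp (-(t^2/2)) * Real.exp (-((l*(-y))*t)))
      / (l * gm ν 1)) := by
    intro y hy
    have hb : 0 < l * (-y) := mul_pos hl (by linarith)
    have hI := (int_series hν hb).trans (tsum_gm_eq hν hb)
    rw [hν2, hν3] at hI
    have hwz : ((l*(-y))^2/2) = -(y^2*(2*α-1)/2) := by
      have h : (l*(-y))^2 = l^2*y^2 := by ring
      rw [h, hl2]; ring
    rw [hwz] at hI
    have hk1 : M γ (3/2) (y^2*(2*α-1)/2)
        = Real.exp (y^2*(2*α-1)/2) * M (3/2 - γ) (3/2) (-(y^2*(2*α-1)/2)) :=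
      kummer γ (3/2) (y^2*(2*α-1)/2) (by norm_num)
    have hk2 : M (γ - 1/2) (1/2) (y^2*(2*α-1)/2)
        = Real.exp (y^2*(2*α-1)/2) * M (1 - γ) (1/2) (-(y^2*(2*α-1)/2)) := by
      have h := kummer (γ - 1/2) (1/2) (y^2*(2*α-1)/2) (by norm_num)
      rw [show (1/2 : ℝ) - (γ - 1/2) = 1 - γ by ring] at h
      exact h
    show F α y = _
    rw [F]
    rw [← hγdef, hk1, hk2, hI, hC]
    have hlg : l * gm ν 1 ≠ 0 := (mul_pos hl hg1).ne'
    field_simp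
    ring
  -- bound
  have hint0 : IntegrableOn (fun t : ℝ => t^(ν-1) * Real.exp (-(t^2/2))) (Ioi 0) := by
    refine (integrableOn_rpow_mul_exp_neg_mul_sq one_half_pos (by linarith : (-1:ℝ) < ν-1)).congr_fun
      (fun t ht => ?_) measurableSet_Ioi
    beta_reduce
    rw [show (-(1/2:ℝ) * t^2) = -(t^2/2) by ring]
  have hIval : ∫ t in Ioi (0:ℝ), t^(ν-1) * Real.exp (-(t^2/2)) = gm ν 0 := by
    rw [gauss_moment (by linarith : (-1:ℝ) < ν-1)]
    unfold gm
    rw [show (ν-1-1)/2 = (ν + ((0:ℕ):ℝ) - 2)/2 by push_cast; ring,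
      show (ν-1+1)/2 = (ν + ((0:ℕ):ℝ))/2 by push_cast; ring]
  have hbound : ∀ y : ℝ, y < 0 → ‖F α y‖ ≤ (gm ν 0 / (l * gm ν 1)) * Real.exp (y^2*(2*α-1)/2) := by
    intro y hy
    have hb : 0 < l * (-y) := mul_pos hl (by linarith)
    have hintb : IntegrableOn (fun t : ℝ => t^(ν-1) * Real.exp (-(t^2/2)) * Real.exp (-((l*(-y))*t))) (Ioi 0) := by
      apply Integrable.mono hint0
      · exact hint0.1.mul ((Real.continuous_exp.comp (by continuity)).aestronglyMeasurable.restrict)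
      · rw [ae_restrict_iff' measurableSet_Ioi]
        filter_upwards with t
        intro ht
        rw [Set.mem_Ioi] at ht
        have h1 : Real.exp (-((l*(-y))*t)) ≤ 1 := by
          rw [Real.exp_le_one_iff]
          nlinarith
        rw [Real.norm_eq_abs, Real.norm_eq_abs, abs_mul]
        calc |t^(ν-1) * Real.exp (-(t^2/2))| * |Real.exp (-((l*(-y))*t))|
            ≤ |t^(ν-1) * Real.exp (-(t^2/2))| * 1 := by
              apply mul_le_mul_of_nonneg_left _ (abs_nonneg _)
              rw [abs_of_pos (Real.exp_pos _)]
              exact h1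
          _ = |t^(ν-1) * Real.exp (-(t^2/2))| := mul_one _
    have hIle : (∫ t in Ioi (0:ℝ), t^(ν-1) * Real.exp (-(t^2/2)) * Real.exp (-((l*(-y))*t)))
        ≤ ∫ t in Ioi (0:ℝ), t^(ν-1) * Real.exp (-(t^2/2)) := by
      apply setIntegral_mono_on hintb hint0 measurableSet_Ioi
      intro t ht
      rw [Set.mem_Ioi] at ht
      have h1 : Real.exp (-((l*(-y))*t)) ≤ 1 := by
        rw [Real.exp_le_one_iff]; nlinarith
      have h2 : (0:ℝ) ≤ t^(ν-1) * Real.exp (-(t^2/2)) := by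
        have := Real.rpow_nonneg ht.le (ν-1)
        positivity
      exact mul_le_of_le_one_right h2 h1
    have hInn : (0:ℝ) ≤ ∫ t in Ioi (0:ℝ), t^(ν-1) * Real.exp (-(t^2/2)) * Real.exp (-((l*(-y))*t)) := by
      apply setIntegral_nonneg measurableSet_Ioi
      intro t ht
      rw [Set.mem_Ioi] at ht
      have := Real.rpow_nonneg ht.le (ν-1)
      positivity
    rw [hker y hy]
    rw [Real.norm_eq_abs, abs_of_nonneg (by positivity)]
    rw [mul_comm (gm ν 0 / (l * gm ν 1)) _]
    apply mul_le_mul_of_nonneg_left _ (Real.exp_pos _).le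
    apply div_le_div₀ (le_of_lt hg0) (hIle.trans hIval.le) (mul_pos hl hg1) le_rfl
  -- limit
  have hsq : Tendsto (fun y : ℝ => y^2) atBot atTop := by
    have h := (tendsto_pow_atTop (n := 2) (by norm_num)).comp (tendsto_neg_atBot_atTop : Tendsto (fun y : ℝ => -y) atBot atTop)
    refine h.congr (fun y => ?_)
    simp [neg_pow]
  have hz : Tendsto (fun y : ℝ => y^2*(2*α-1)/2) atBot atBot := by
    have h := hsq.atTop_mul_const_of_neg (show (2*α-1)/2 < 0 by linarith)
    refine h.congr (fun y => ?_)
    ring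
  have hexp : Tendsto (fun y : ℝ => Real.exp (y^2*(2*α-1)/2)) atBot (nhds 0) :=
    Real.tendsto_exp_atBot.comp hz
  have hlim : Tendsto (fun y : ℝ => (gm ν 0 / (l * gm ν 1)) * Real.exp (y^2*(2*α-1)/2)) atBot (nhds 0) := by
    have := hexp.const_mul (gm ν 0 / (l * gm ν 1))
    simpa using this
  apply squeeze_zero_norm' _ hlim
  filter_upwards [eventually_lt_atBot (0:ℝ)] with y hy
  exact hbound y hy
end

section
/- Let α ≥ 0 with α ≠ 1/2, set γ(α) = α/(2α−1) and z(y,α) = y²(2α−1)/2. If g : ℝ → ℝ is twice continuously differentiable and satisfies Kummer's differential equation z·g''(z) + (3/2 − z)·g'(z) − γ(α)·g(z) = 0 for every z in the range of y ↦ z(y,α), then the function f(y) = |y|·g(z(y,α)) satisfies f''(y) − (2α−1) y f'(y) − f(y) = 0 for all y ≠ 0. -/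
open Real Filter

-- key computation for h y = y * g (y^2*(2α-1)/2), valid for all y
lemma key_h (α : ℝ) (hα' : α ≠ 1 / 2) (g : ℝ → ℝ) (hg : ContDiff ℝ 2 g)
    (hKummer : ∀ z ∈ Set.range (fun y : ℝ => y ^ 2 * (2 * α - 1) / 2),
      z * deriv (deriv g) z + (3 / 2 - z) * deriv g z - (α / (2 * α - 1)) * g z = 0)
    (y : ℝ) :
    deriv (deriv (fun y : ℝ => y * g (y ^ 2 * (2 * α - 1) / 2))) y -
      (2 * α - 1) * y * deriv (fun y : ℝ => y * g (y ^ 2 * (2 * α - 1) / 2)) y -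
      y * g (y ^ 2 * (2 * α - 1) / 2) = 0 := by
  have hgd : Differentiable ℝ g := hg.differentiable (by norm_num)
  have hg1 : ContDiff ℝ 1 (deriv g) := by
    have h2 : ContDiff ℝ ((1 : ℕ) + 1) g := by exact_mod_cast hg
    exact (contDiff_succ_iff_deriv.mp h2).2.2
  have hgd' : Differentiable ℝ (deriv g) := hg1.differentiable (by norm_num)
  set u : ℝ → ℝ := fun y => y ^ 2 * (2 * α - 1) / 2 with hu_def
  have hu : ∀ y : ℝ, HasDerivAt u ((2 * α - 1) * y) y := by
    intro y
    have := ((hasDerivAt_pow 2 y).mul_const (2 * α - 1)).div_const 2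
    refine this.congr_deriv ?_
    ring
  have hh : ∀ y : ℝ, HasDerivAt (fun y : ℝ => y * g (u y))
      (g (u y) + (2 * α - 1) * y ^ 2 * deriv g (u y)) y := by
    intro y
    have hc : HasDerivAt (fun y => g (u y)) (deriv g (u y) * ((2 * α - 1) * y)) y :=
      (hgd (u y)).hasDerivAt.comp y (hu y)
    have := (hasDerivAt_id y).mul hc
    refine this.congr_deriv ?_
    simp only [id_eq]
    ring
  have hderiv_h : deriv (fun y : ℝ => y * g (u y)) =
      fun y => g (u y) + (2 * α - 1) * y ^ 2 * deriv g (u y) :=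
    funext fun y => (hh y).deriv
  have hh2 : HasDerivAt (deriv (fun y : ℝ => y * g (u y)))
      (deriv g (u y) * ((2 * α - 1) * y) +
        ((2 * α - 1) * (2 * y) * deriv g (u y) +
          (2 * α - 1) * y ^ 2 * (deriv (deriv g) (u y) * ((2 * α - 1) * y)))) y := by
    rw [hderiv_h]
    have hc1 : HasDerivAt (fun y => g (u y)) (deriv g (u y) * ((2 * α - 1) * y)) y :=
      (hgd (u y)).hasDerivAt.comp y (hu y)
    have hc2 : HasDerivAt (fun y => deriv g (u y)) (deriv (deriv g) (u y) * ((2 * α - 1) * y)) y :=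
      (hgd' (u y)).hasDerivAt.comp y (hu y)
    have hpoly : HasDerivAt (fun y : ℝ => (2 * α - 1) * y ^ 2) ((2 * α - 1) * (2 * y)) y := by
      have := (hasDerivAt_pow 2 y).const_mul (2 * α - 1)
      refine this.congr_deriv ?_
      ring
    exact hc1.add (hpoly.mul hc2)
  rw [hh2.deriv, (hh y).deriv]
  have hne : (2 * α - 1) ≠ 0 := by
    intro h
    apply hα'
    linarith
  have hK := hKummer (u y) ⟨y, rfl⟩
  have hu_eq : u y = y ^ 2 * (2 * α - 1) / 2 := rfl
  field_simp at hK
  rw [hu_eq] at hK ⊢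
  linear_combination y * hK

theorem stmt_6 (α : ℝ) (hα : 0 ≤ α) (hα' : α ≠ 1 / 2) (g : ℝ → ℝ)
    (hg : ContDiff ℝ 2 g)
    (hKummer : ∀ z ∈ Set.range (fun y : ℝ => y ^ 2 * (2 * α - 1) / 2),
      z * deriv (deriv g) z + (3 / 2 - z) * deriv g z - (α / (2 * α - 1)) * g z = 0) :
    ∀ y : ℝ, y ≠ 0 →
      deriv (deriv (fun y : ℝ => |y| * g (y ^ 2 * (2 * α - 1) / 2))) y -
        (2 * α - 1) * y * deriv (fun y : ℝ => |y| * g (y ^ 2 * (2 * α - 1) / 2)) y -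
        |y| * g (y ^ 2 * (2 * α - 1) / 2) = 0 := by
  intro y hy
  set h : ℝ → ℝ := fun y => y * g (y ^ 2 * (2 * α - 1) / 2) with hh_def
  set f : ℝ → ℝ := fun y => |y| * g (y ^ 2 * (2 * α - 1) / 2) with hf_def
  have key := key_h α hα' g hg hKummer y
  rcases lt_or_gt_of_ne hy with hneg | hpos
  · have hev : f =ᶠ[nhds y] fun x => -h x := by
      filter_upwards [eventually_lt_nhds hneg] with x hx
      simp [hf_def, hh_def, abs_of_neg hx]
    have hd1 : deriv f =ᶠ[nhds y] deriv (fun x => -h x) := hev.deriv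
    have hd1' : deriv (fun x => -h x) = fun x => -deriv h x := by
      funext x
      exact deriv.neg
    have hd2 : deriv (deriv f) y = deriv (fun x => -deriv h x) y := by
      rw [← hd1']
      exact (hd1.deriv).self_of_nhds
    have hd3 : deriv (fun x => -deriv h x) y = -deriv (deriv h) y := deriv.neg
    have hfy : f y = -h y := by simp [hf_def, hh_def, abs_of_neg hneg]
    have hdy : deriv f y = -deriv h y := by rw [hd1.self_of_nhds, hd1']
    rw [hd2, hd3, hdy] at *
    show -deriv (deriv h) y - (2 * α - 1) * y * (-deriv h y) - |y| * g (y ^ 2 * (2 * α - 1) / 2) = 0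
    have : |y| * g (y ^ 2 * (2 * α - 1) / 2) = -h y := by
      simp [hh_def, abs_of_neg hneg]
    rw [this]
    simp only [hh_def] at key ⊢
    linarith
  · have hev : f =ᶠ[nhds y] h := by
      filter_upwards [eventually_gt_nhds hpos] with x hx
      simp [hf_def, hh_def, abs_of_pos hx]
    have hd1 : deriv f =ᶠ[nhds y] deriv h := hev.deriv
    have hd2 : deriv (deriv f) y = deriv (deriv h) y := (hd1.deriv).self_of_nhds
    have hdy : deriv f y = deriv h y := hd1.self_of_nhds
    have : |y| * g (y ^ 2 * (2 * α - 1) / 2) = h y := by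
      simp [hh_def, abs_of_pos hpos]
    rw [hd2, hdy, this]
    simpa [hh_def] using key
end

section
/- Let γ, β be real numbers with β not a nonpositive integer. Then the function g(z) = M(γ, β, z) is twice continuously differentiable on ℝ and satisfies Kummer's differential equation z·g''(z) + (β − z)·g'(z) − γ·g(z) = 0 for all z ∈ ℝ. -/
open Real Filter Polynomial

open FormalMultilinearSeries ContinuousLinearMap in
/-- The derivative series of an `ofScalars` power series, applied to an arbitrary vector. -/
lemma ofScalars_derivSeries_apply' (a : ℕ → ℝ) (n : ℕ) (y w : ℝ) :
    (ofScalars ℝ a).derivSeries n (fun _ ↦ y) w = (n + 1 : ℝ) * a (n + 1) * y ^ n * w := by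
  simp only [derivSeries, compFormalMultilinearSeries_apply,
    compContinuousMultilinearMap_coe, ContinuousLinearEquiv.coe_coe,
    LinearIsometryEquiv.coe_coe, Function.comp_apply,
    changeOriginSeries, ContinuousMultilinearMap.sum_apply, map_sum,
    coe_sum', Finset.sum_apply,
    continuousMultilinearCurryFin1_apply, Matrix.zero_empty]
  have hterm : ∀ (s : Finset (Fin (1 + n))) (hs : s.card = n),
      ((ofScalars ℝ a).changeOriginSeriesTerm 1 n s hs (fun _ => y)) (Fin.snoc 0 w)
        = a (n + 1) * y ^ n * w := by
    intro s hs
    have h0 : (Fin.snoc 0 w : Fin 1 → ℝ) = fun _ => w := by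
      funext i
      simp [Fin.snoc]
    rw [h0, changeOriginSeriesTerm_apply]
    rw [ofScalars]
    simp only [ContinuousMultilinearMap.smul_apply,
      ContinuousMultilinearMap.mkPiAlgebraFin_apply, smul_eq_mul]
    rw [List.prod_ofFn]
    rw [Finset.prod_piecewise]
    simp only [Finset.univ_inter, Finset.prod_const, hs]
    have hcompl : (Finset.univ \ s).card = 1 := by
      rw [Finset.card_sdiff_of_subset (Finset.subset_univ s), Finset.card_univ, Fintype.card_fin, hs]
      omega
    rw [hcompl, pow_one, add_comm 1 n]
    ring
  calc (∑ s : {s : Finset (Fin (1 + n)) // s.card = n},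
          ((ofScalars ℝ a).changeOriginSeriesTerm 1 n s.1 s.2 (fun _ => y)) (Fin.snoc 0 w))
      = ∑ _s : {s : Finset (Fin (1 + n)) // s.card = n}, a (n + 1) * y ^ n * w := by
        exact Finset.sum_congr rfl fun s _ => hterm s.1 s.2
    _ = (n + 1 : ℝ) * a (n + 1) * y ^ n * w := by
        rw [Finset.sum_const]
        have : Fintype.card {s : Finset (Fin (1 + n)) // s.card = n} = n + 1 := by
          rw [Fintype.card_subtype, ← Finset.powerset_univ, ← Finset.powersetCard_eq_filter,
            Finset.card_powersetCard, Finset.card_univ, Fintype.card_fin,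
            add_comm 1 n, Nat.choose_succ_self_right]
        simp [Finset.card_univ, this]
        ring

lemma aux_summable (a t : ℕ → ℝ) (hrec : ∀ n, |a (n + 1)| = t n * |a n|)
    (htend : Tendsto t atTop (nhds 0)) (r : ℝ) (hr : 0 ≤ r) :
    Summable (fun n => |a n| * r ^ n) := by
  apply summable_of_ratio_norm_eventually_le (r := 1 / 2) (by norm_num)
  have h : ∀ᶠ n in atTop, t n * r ≤ 1 / 2 :=
    (htend.mul_const r).eventually (eventually_le_nhds (by norm_num))
  filter_upwards [h] with n hn
  have h1 : ‖|a (n + 1)| * r ^ (n + 1)‖ = t n * r * (|a n| * r ^ n) := by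
    rw [Real.norm_eq_abs,
      abs_of_nonneg (show (0:ℝ) ≤ |a (n + 1)| * r ^ (n + 1) by positivity), hrec n, pow_succ]
    ring
  rw [h1, Real.norm_eq_abs, abs_of_nonneg (show (0:ℝ) ≤ |a n| * r ^ n by positivity)]
  exact mul_le_mul_of_nonneg_right hn (by positivity)

open FormalMultilinearSeries in
lemma aux_radius (a : ℕ → ℝ) (hs : ∀ r : ℝ, 0 ≤ r → Summable fun n => |a n| * r ^ n) :
    (ofScalars ℝ a).radius = ⊤ := by
  apply FormalMultilinearSeries.radius_eq_top_of_summable_norm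
  intro r
  have h : ∀ n, ‖ofScalars ℝ a n‖ = |a n| := fun n => by
    rw [ofScalars_norm, Real.norm_eq_abs]
  simp only [h]
  exact hs r r.coe_nonneg

lemma aux_tendsto (γ β : ℝ) :
    Tendsto (fun n : ℕ => |γ + n| / (|β + n| * (n + 1))) atTop (nhds 0) := by
  have hg : Tendsto (fun n : ℕ => (γ + n) / ((β + n) * (n + 1))) atTop (nhds 0) := by
    have h1 : Tendsto (fun n : ℕ => γ / n + 1) atTop (nhds 1) := by
      simpa using (tendsto_const_div_atTop_nhds_zero_nat γ).add tendsto_const_nhds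
    have h2 : Tendsto (fun n : ℕ => β / n + 1) atTop (nhds 1) := by
      simpa using (tendsto_const_div_atTop_nhds_zero_nat β).add tendsto_const_nhds
    have h3 : Tendsto (fun n : ℕ => 1 / ((n : ℝ) + 1)) atTop (nhds 0) :=
      tendsto_one_div_add_atTop_nhds_zero_nat
    have h4 : Tendsto (fun n : ℕ => (γ / n + 1) / (β / n + 1) * (1 / ((n : ℝ) + 1)))
        atTop (nhds 0) := by
      have := (h1.div h2 one_ne_zero).mul h3
      rw [mul_zero] at this
      exact this
    apply h4.congr'
    filter_upwards [eventually_ge_atTop 1] with n hn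
    have hn0 : (n : ℝ) ≠ 0 := Nat.cast_ne_zero.mpr (by omega)
    rcases eq_or_ne (β + n) 0 with hb | hb
    · have hb2 : β / n + 1 = 0 := by field_simp; linarith [hb]
      rw [hb2, div_zero, zero_mul, hb, zero_mul, div_zero]
    · field_simp
  have h5 := hg.abs
  rw [abs_zero] at h5
  apply h5.congr
  intro n
  rw [abs_div, abs_mul]
  congr 1
  congr 1
  exact abs_of_nonneg (by positivity)

open FormalMultilinearSeries in
/-- Extracting the scalar derivative series from a power series representation. -/
lemma aux_deriv_hasSum (f : ℝ → ℝ) (a : ℕ → ℝ)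
    (hf : HasFPowerSeriesOnBall f (ofScalars ℝ a) 0 ⊤) (y : ℝ) :
    HasSum (fun n : ℕ => ((n : ℝ) + 1) * a (n + 1) * y ^ n) (deriv f y) := by
  have h := hf.fderiv.hasSum (y := y) (by simp)
  have h2 := (ContinuousLinearMap.apply ℝ ℝ (1 : ℝ)).hasSum h
  simp only [zero_add, ContinuousLinearMap.apply_apply] at h2
  have h3 : ∀ n, (ofScalars ℝ a).derivSeries n (fun _ => y) 1
      = ((n : ℝ) + 1) * a (n + 1) * y ^ n := by
    intro n
    rw [ofScalars_derivSeries_apply']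
    ring
  simp only [h3, fderiv_apply_one_eq_deriv] at h2
  exact h2

lemma aux_algebra (A B F u v w : ℝ) (hB : B ≠ 0) (hF : F ≠ 0) (hu : u ≠ 0) (hv : v ≠ 0) :
    v * u * (A * w / (B * u * (F * v))) = w * (A / (B * F)) := by
  field_simp

lemma aux_shift (c : ℕ → ℝ) (s : ℝ) (h : HasSum (fun n => c (n + 1)) s) (h0 : c 0 = 0) :
    HasSum c s := by
  have := (hasSum_nat_add_iff (f := c) 1).mp (by simpa using h)
  simpa [h0] using this

theorem stmt_7 (γ β : ℝ) (hβ : ∀ n : ℕ, β ≠ -(n : ℝ)) :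
    ContDiff ℝ 2 (fun z => M γ β z) ∧
    ∀ z : ℝ,
      z * deriv (deriv (fun z => M γ β z)) z + (β - z) * deriv (fun z => M γ β z) z -
        γ * M γ β z = 0 := by
  classical
  open FormalMultilinearSeries in
  have hβ' : ∀ n : ℕ, β + n ≠ 0 := by
    intro n h
    exact hβ n (by linarith)
  have hB : ∀ n : ℕ, (ascPochhammer ℝ n).eval β ≠ 0 := by
    intro n
    induction n with
    | zero => simp
    | succ k ih =>
      rw [ascPochhammer_succ_right]
      simp only [eval_mul, eval_add, eval_X, eval_natCast]
      exact mul_ne_zero ih (hβ' k)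
  set a : ℕ → ℝ :=
    fun n => (ascPochhammer ℝ n).eval γ / ((ascPochhammer ℝ n).eval β * n.factorial) with ha
  set b : ℕ → ℝ := fun n => ((n : ℝ) + 1) * a (n + 1) with hb
  have hkey : ∀ n : ℕ, ((n : ℝ) + 1) * (β + n) * a (n + 1) = (γ + n) * a n := by
    intro n
    have hA1 : (ascPochhammer ℝ (n + 1)).eval γ = (ascPochhammer ℝ n).eval γ * (γ + n) := by
      rw [ascPochhammer_succ_right]
      simp [eval_mul]
    have hB1 : (ascPochhammer ℝ (n + 1)).eval β = (ascPochhammer ℝ n).eval β * (β + n) := by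
      rw [ascPochhammer_succ_right]
      simp [eval_mul]
    have hF1 : ((n + 1).factorial : ℝ) = (n.factorial : ℝ) * ((n : ℝ) + 1) := by
      rw [Nat.factorial_succ]
      push_cast
      ring
    have hfne : ((n.factorial : ℝ)) ≠ 0 := Nat.cast_ne_zero.mpr n.factorial_ne_zero
    have hn1 : ((n : ℝ) + 1) ≠ 0 := by positivity
    have e1 : a (n + 1)
        = (ascPochhammer ℝ n).eval γ * (γ + n)
          / ((ascPochhammer ℝ n).eval β * (β + n) * ((n.factorial : ℝ) * ((n : ℝ) + 1))) := by
      simp only [ha]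
      rw [hA1, hB1, hF1]
    rw [e1]
    simp only [ha]
    exact aux_algebra _ _ _ _ _ _ (hB n) hfne (hβ' n) hn1
  have habs : ∀ n : ℕ, |a (n + 1)| = (|γ + n| / (|β + n| * (n + 1))) * |a n| := by
    intro n
    have hn1 : ((n : ℝ) + 1) ≠ 0 := by positivity
    have h1 : a (n + 1) = (γ + n) * a n / (((n : ℝ) + 1) * (β + n)) := by
      rw [eq_div_iff (mul_ne_zero hn1 (hβ' n))]
      linear_combination hkey n
    rw [h1, abs_div, abs_mul, abs_mul, abs_of_nonneg (show (0:ℝ) ≤ (n : ℝ) + 1 by positivity)]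
    ring
  have habs' : ∀ n : ℕ, |b (n + 1)| = (|γ + 1 + n| / (|β + 1 + n| * (n + 1))) * |b n| := by
    intro n
    have hn1 : ((n : ℝ) + 1) ≠ 0 := by positivity
    have hn2 : ((n : ℝ) + 2) ≠ 0 := by positivity
    have hYne : |β + 1 + n| ≠ 0 := by
      have : β + 1 + n = β + ((n : ℕ) + 1 : ℕ) := by push_cast; ring
      rw [this]
      exact abs_ne_zero.mpr (hβ' (n + 1))
    have h2 : |a (n + 2)| = (|γ + 1 + n| / (|β + 1 + n| * ((n : ℝ) + 2))) * |a (n + 1)| := by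
      have := habs (n + 1)
      push_cast at this
      calc |a (n + 2)| = |a (n + 1 + 1)| := by norm_num
        _ = |γ + ((n : ℝ) + 1)| / (|β + ((n : ℝ) + 1)| * (((n : ℝ) + 1) + 1)) * |a (n + 1)| :=
            this
        _ = (|γ + 1 + n| / (|β + 1 + n| * ((n : ℝ) + 2))) * |a (n + 1)| := by
            rw [show γ + ((n : ℝ) + 1) = γ + 1 + n by ring,
              show β + ((n : ℝ) + 1) = β + 1 + n by ring,
              show ((n : ℝ) + 1) + 1 = (n : ℝ) + 2 by ring]
    have hbn1 : |b (n + 1)| = ((n : ℝ) + 2) * |a (n + 2)| := by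
      simp only [hb]
      push_cast
      rw [show ((n : ℝ) + 1 + 1) = (n : ℝ) + 2 by ring, abs_mul,
        abs_of_nonneg (show (0:ℝ) ≤ (n : ℝ) + 2 by positivity)]
    have hbn : |b n| = ((n : ℝ) + 1) * |a (n + 1)| := by
      simp only [hb]
      rw [abs_mul, abs_of_nonneg (show (0:ℝ) ≤ (n : ℝ) + 1 by positivity)]
    rw [hbn1, hbn, h2]
    field_simp
  -- summability and radius
  have hsa : ∀ r : ℝ, 0 ≤ r → Summable fun n => |a n| * r ^ n :=
    aux_summable a _ habs (aux_tendsto γ β)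
  have hsb : ∀ r : ℝ, 0 ≤ r → Summable fun n => |b n| * r ^ n :=
    aux_summable b _ habs' (aux_tendsto (γ + 1) (β + 1))
  have hra : (FormalMultilinearSeries.ofScalars ℝ a).radius = ⊤ := aux_radius a hsa
  have hrb : (FormalMultilinearSeries.ofScalars ℝ b).radius = ⊤ := aux_radius b hsb
  set p : FormalMultilinearSeries ℝ ℝ ℝ := FormalMultilinearSeries.ofScalars ℝ a with hp
  have hg : HasFPowerSeriesOnBall p.sum p 0 ⊤ := by
    have h := p.hasFPowerSeriesOnBall (by rw [hp, hra]; exact ENNReal.zero_lt_top)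
    rwa [hp, hra] at h
  have hMsum : (fun z => M γ β z) = p.sum := by
    funext z
    rw [M, FormalMultilinearSeries.sum]
    apply tsum_congr
    intro n
    rw [hp, FormalMultilinearSeries.ofScalars_apply_eq, smul_eq_mul, ha, div_mul_eq_mul_div]
  have hsum0 : ∀ y : ℝ, HasSum (fun n : ℕ => a n * y ^ n) (p.sum y) := by
    intro y
    have h := hg.hasSum (y := y) (by simp)
    simp only [zero_add, hp, FormalMultilinearSeries.ofScalars_apply_eq, smul_eq_mul] at h
    exact h
  have hsum1 : ∀ y : ℝ, HasSum (fun n : ℕ => ((n : ℝ) + 1) * a (n + 1) * y ^ n) (deriv p.sum y) :=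
    aux_deriv_hasSum p.sum a hg
  have hq : HasFPowerSeriesOnBall (deriv p.sum) (FormalMultilinearSeries.ofScalars ℝ b) 0 ⊤ := by
    refine ⟨by rw [hrb], ENNReal.zero_lt_top, ?_⟩
    intro y _
    simp only [zero_add, FormalMultilinearSeries.ofScalars_apply_eq, smul_eq_mul]
    exact hsum1 y
  have hsum2 : ∀ y : ℝ,
      HasSum (fun n : ℕ => ((n : ℝ) + 1) * b (n + 1) * y ^ n) (deriv (deriv p.sum) y) :=
    aux_deriv_hasSum (deriv p.sum) b hq
  have hMz : ∀ z, M γ β z = p.sum z := fun z => congrFun hMsum z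
  constructor
  · rw [hMsum]
    rw [contDiff_iff_contDiffAt]
    intro x
    exact (hg.analyticAt_of_mem (by simp)).contDiffAt
  · intro z
    rw [hMsum, hMz]
    -- z * g''
    have T2 : HasSum (fun n : ℕ => (n : ℝ) * b n * z ^ n) (z * deriv (deriv p.sum) z) := by
      apply aux_shift
      · have h := (hsum2 z).mul_left z
        have he : (fun n : ℕ => ((n + 1 : ℕ) : ℝ) * b (n + 1) * z ^ (n + 1))
            = fun n : ℕ => z * (((n : ℝ) + 1) * b (n + 1) * z ^ n) := by
          funext n
          push_cast
          ring
        rw [show (fun n : ℕ => ((fun m : ℕ => (m : ℝ) * b m * z ^ m) (n + 1)))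
            = fun n : ℕ => ((n + 1 : ℕ) : ℝ) * b (n + 1) * z ^ (n + 1) from rfl, he]
        exact h
      · simp
    -- z * g'
    have T1 : HasSum (fun n : ℕ => (n : ℝ) * a n * z ^ n) (z * deriv p.sum z) := by
      apply aux_shift
      · have h := (hsum1 z).mul_left z
        have he : (fun n : ℕ => ((n + 1 : ℕ) : ℝ) * a (n + 1) * z ^ (n + 1))
            = fun n : ℕ => z * (((n : ℝ) + 1) * a (n + 1) * z ^ n) := by
          funext n
          push_cast
          ring
        rw [show (fun n : ℕ => ((fun m : ℕ => (m : ℝ) * a m * z ^ m) (n + 1)))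
            = fun n : ℕ => ((n + 1 : ℕ) : ℝ) * a (n + 1) * z ^ (n + 1) from rfl, he]
        exact h
      · simp
    have Hβ := (hsum1 z).mul_left β
    have Hγ := (hsum0 z).mul_left γ
    have total := ((T2.add Hβ).sub T1).sub Hγ
    have hzero : (fun n : ℕ => ((n : ℝ) * b n * z ^ n + β * (((n : ℝ) + 1) * a (n + 1) * z ^ n)
        - (n : ℝ) * a n * z ^ n) - γ * (a n * z ^ n)) = fun _ => 0 := by
      funext n
      simp only [hb]
      linear_combination z ^ n * hkey n
    rw [hzero] at total
    have hS : z * deriv (deriv p.sum) z + β * deriv p.sum z - z * deriv p.sum z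
        - γ * p.sum z = 0 := total.unique hasSum_zero
    linear_combination hS
end

section
/- For 0 < α < 1/2, set γ(α) = α/(2α−1) and z(y,α) = y²(2α−1)/2, and let F(y,α) = y·M(γ(α), 3/2, z(y,α)) + [Γ(1−γ(α)) / (√(2(1−2α))·Γ(3/2−γ(α)))]·M(γ(α)−1/2, 1/2, z(y,α)). Suppose B : (0, 1/2) → (0, ∞) satisfies the free-boundary equation B(α)·F_y(B(α), α) = F(B(α), α) for every α ∈ (0, 1/2), where F_y denotes the derivative of F with respect to y. Then B(α) → ∞ as α → 0⁺. -/
open Real Filter Polynomial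
open Finset

noncomputable def P (x : ℝ) (n : ℕ) : ℝ := (ascPochhammer ℝ n).eval x

lemma P_zero (x : ℝ) : P x 0 = 1 := by simp [P, ascPochhammer]

lemma P_succ (x : ℝ) (n : ℕ) : P x (n+1) = P x n * (x + n) := by
  simp [P, ascPochhammer_succ_eval]

lemma tsum_exp_eq (x : ℝ) : ∑' n : ℕ, x ^ n / (n.factorial : ℝ) = Real.exp x := by
  rw [Real.exp_eq_exp_ℝ, NormedSpace.exp_eq_tsum_div]

lemma summable_aux_s13 {K : ℝ} {f : ℕ → ℝ} (hf : ∀ n, |f n| ≤ K ^ n / n.factorial) :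
    Summable f :=
  Summable.of_norm_bounded (Real.summable_pow_div_factorial K) hf

lemma tsum_le_of_abs_le {f g : ℕ → ℝ} (h : ∀ n, |f n| ≤ g n) (hg : Summable g) :
    |∑' n, f n| ≤ ∑' n, g n := by
  have h' : ∀ n, ‖f n‖ ≤ g n := fun n => (Real.norm_eq_abs _ ▸ h n)
  have hf : Summable fun n => ‖f n‖ :=
    Summable.of_nonneg_of_le (fun n => norm_nonneg _) h' hg
  have h1 : ‖∑' n, f n‖ ≤ ∑' n, ‖f n‖ := norm_tsum_le_tsum_norm hf
  rw [Real.norm_eq_abs] at h1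
  exact h1.trans (Summable.tsum_le_tsum h' hf hg)

lemma fact_le_poch (n : ℕ) : (n.factorial : ℝ) ≤ P (3/2) n := by
  induction n with
  | zero => simp [P_zero]
  | succ n ih =>
      rw [P_succ, Nat.factorial_succ, Nat.cast_mul]
      have h2 : ((n:ℝ)+1) ≤ 3/2 + n := by linarith
      have hp : (0:ℝ) < P (3/2) n := ascPochhammer_pos n _ (by norm_num)
      calc ((n+1 : ℕ) : ℝ) * n.factorial = (n.factorial : ℝ) * ((n:ℝ)+1) := by
            push_cast; ring
        _ ≤ P (3/2) n * (3/2 + n) :=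
            mul_le_mul ih h2 (by positivity) hp.le

lemma poch_half_pos (n : ℕ) : 0 < P (1/2) n := ascPochhammer_pos n _ (by norm_num)

lemma poch_neg_bound {d : ℝ} (hd0 : 0 ≤ d) (hd1 : d ≤ 1) :
    ∀ n : ℕ, 1 ≤ n → -(d * (n-1).factorial) ≤ P (-d) n ∧ P (-d) n ≤ 0 := by
  intro n hn
  induction n with
  | zero => omega
  | succ n ih =>
      rcases Nat.eq_or_lt_of_le hn with h1 | h1
      · have : n = 0 := by omega
        subst this
        rw [P_succ, P_zero]
        norm_num
        exact hd0
      · have hn1 : 1 ≤ n := by omega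
        obtain ⟨ihl, ihu⟩ := ih hn1
        rw [P_succ]
        have hf : (0:ℝ) ≤ -d + n := by
          have : (1:ℝ) ≤ (n:ℝ) := by exact_mod_cast hn1
          linarith
        constructor
        · have h2 : P (-d) n * (-d + n) ≥ (-(d * (n-1).factorial)) * (-d + n) := by
            apply mul_le_mul_of_nonneg_right ihl hf
          have h3 : (-(d * (n-1).factorial)) * (-d + n) ≥ -(d * n.factorial) := by
            have hfa : (0:ℝ) < (n-1).factorial := by positivity
            have hfn : ((n-1).factorial : ℝ) * n = n.factorial := by
              rw [mul_comm]
              exact_mod_cast congrArg (Nat.cast : ℕ → ℝ)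
                (Nat.mul_factorial_pred (by omega : n ≠ 0))
            nlinarith
          have : n + 1 - 1 = n := by omega
          rw [this]
          linarith
        · exact mul_nonpos_of_nonpos_of_nonneg ihu hf

lemma poch_b_id (d : ℝ) (m : ℕ) :
    (2*(m:ℝ)+1) * P (-(1/2)-d) (m+1) =
      -(1+2*d) * (∏ k ∈ range m, (1 - 2*d/(2*(k:ℝ)+1))) * P (1/2) (m+1) := by
  induction m with
  | zero => simp [P_succ, P_zero]; ring
  | succ m ih =>
      have hne : (2*(m:ℝ)+1) ≠ 0 := by positivity
      have hp : P (-(1/2)-d) (m+1) =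
          -(1+2*d) * (∏ k ∈ range m, (1 - 2*d/(2*(k:ℝ)+1))) * P (1/2) (m+1) / (2*(m:ℝ)+1) := by
        rw [eq_div_iff hne]; linarith [ih]
      rw [P_succ, P_succ (1/2), prod_range_succ, hp]
      push_cast
      field_simp
      ring

lemma prod_one_sub_bounds {d : ℝ} (hd0 : 0 ≤ d) (hd2 : d ≤ 1/2) (m : ℕ) :
    1 - 2*d*m ≤ (∏ k ∈ range m, (1 - 2*d/(2*(k:ℝ)+1))) ∧
      (∏ k ∈ range m, (1 - 2*d/(2*(k:ℝ)+1))) ≤ 1 := by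
  have hfac : ∀ k : ℕ, 0 ≤ 1 - 2*d/(2*(k:ℝ)+1) ∧ 1 - 2*d/(2*(k:ℝ)+1) ≤ 1 := by
    intro k
    have hk : (1:ℝ) ≤ 2*(k:ℝ)+1 := by
      have : (0:ℝ) ≤ (k:ℝ) := Nat.cast_nonneg k
      linarith
    have h1 : 0 ≤ 2*d/(2*(k:ℝ)+1) := by positivity
    have h2 : 2*d/(2*(k:ℝ)+1) ≤ 2*d := by
      rw [div_le_iff₀ (by positivity)]; nlinarith
    constructor <;> nlinarith
  induction m with
  | zero => simp
  | succ m ih =>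
      obtain ⟨il, iu⟩ := ih
      rw [prod_range_succ]
      obtain ⟨f0, f1⟩ := hfac m
      have hprod0 : (0:ℝ) ≤ ∏ k ∈ range m, (1 - 2*d/(2*(k:ℝ)+1)) :=
        Finset.prod_nonneg fun k _ => (hfac k).1
      constructor
      · push_cast
        have h2 : 2*d/(2*(m:ℝ)+1) ≤ 2*d := by
          rw [div_le_iff₀ (by positivity)]; nlinarith
        nlinarith
      · nlinarith

lemma prod_factor_nonneg {d : ℝ} (hd0 : 0 ≤ d) (hd2 : d ≤ 1/2) (k : ℕ) :
    (0:ℝ) ≤ 1 - 2*d/(2*(k:ℝ)+1) := by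
  have hk : (0:ℝ) ≤ (k:ℝ) := Nat.cast_nonneg k
  have h2 : 2*d/(2*(k:ℝ)+1) ≤ 2*d := by
    rw [div_le_iff₀ (by linarith)]; nlinarith
  linarith

lemma poch_b_key {d : ℝ} (hd0 : 0 ≤ d) (hd2 : d ≤ 1/2) (n : ℕ) :
    |(2*(n:ℝ)-1) * P (-(1/2)-d) n + P (1/2) n| ≤ 2*d*n * P (1/2) n := by
  cases n with
  | zero => simp [P_zero]
  | succ m =>
      have hw : 0 < P (1/2) (m+1) := poch_half_pos _
      obtain ⟨hQl, hQu⟩ := prod_one_sub_bounds hd0 hd2 m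
      have hQ0 : (0:ℝ) ≤ ∏ k ∈ range m, (1 - 2*d/(2*(k:ℝ)+1)) :=
        Finset.prod_nonneg fun k _ => prod_factor_nonneg hd0 hd2 k
      have hid := poch_b_id d m
      have hm0 : (0:ℝ) ≤ (m:ℝ) := Nat.cast_nonneg m
      set Q := ∏ k ∈ range m, (1 - 2*d/(2*(k:ℝ)+1)) with hQdef
      set w := P (1/2) (m+1) with hwdef
      have h1 : 0 ≤ (Q - (1 - 2*d*(m:ℝ))) * w := mul_nonneg (by linarith) hw.le
      have h2 : 0 ≤ (1 - Q) * w := mul_nonneg (by linarith) hw.le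
      have h3 : 0 ≤ d * (Q * w) := mul_nonneg hd0 (mul_nonneg hQ0 hw.le)
      have h4 : 0 ≤ d * w := mul_nonneg hd0 hw.le
      have h5 : 0 ≤ (1 - Q) * ((1+2*d) * w) :=
        mul_nonneg (by linarith) (mul_nonneg (by linarith) hw.le)
      have h6 : 0 ≤ d * ((m:ℝ) * w) := mul_nonneg hd0 (mul_nonneg hm0 hw.le)
      push_cast
      rw [show (2*((m:ℝ)+1)-1) = 2*(m:ℝ)+1 by ring]
      rw [abs_le]
      constructor
      · nlinarith [hid, h5, h4, h6]
      · nlinarith [hid, h1, h3, h4]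

lemma poch_b_abs {d : ℝ} (hd0 : 0 ≤ d) (hd2 : d ≤ 1/2) (n : ℕ) :
    |P (-(1/2)-d) n| ≤ 2 * P (1/2) n := by
  cases n with
  | zero => rw [P_zero, P_zero]; norm_num
  | succ m =>
      have hw : 0 < P (1/2) (m+1) := poch_half_pos _
      obtain ⟨hQl, hQu⟩ := prod_one_sub_bounds hd0 hd2 m
      have hQ0 : (0:ℝ) ≤ ∏ k ∈ range m, (1 - 2*d/(2*(k:ℝ)+1)) :=
        Finset.prod_nonneg fun k _ => prod_factor_nonneg hd0 hd2 k
      have hid := poch_b_id d m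
      have hm0 : (0:ℝ) ≤ (m:ℝ) := Nat.cast_nonneg m
      have h2m : (0:ℝ) < 2*(m:ℝ)+1 := by linarith
      set Q := ∏ k ∈ range m, (1 - 2*d/(2*(k:ℝ)+1)) with hQdef
      set w := P (1/2) (m+1) with hwdef
      have h5 : 0 ≤ (1 - Q) * ((1+2*d) * w) :=
        mul_nonneg (by linarith) (mul_nonneg (by linarith) hw.le)
      have h3 : 0 ≤ d * (Q * w) := mul_nonneg hd0 (mul_nonneg hQ0 hw.le)
      have h4 : 0 ≤ d * w := mul_nonneg hd0 hw.le
      have h6 : 0 ≤ (m:ℝ) * w := mul_nonneg hm0 hw.le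
      have hp0 : P (-(1/2)-d) (m+1) ≤ 0 :=
        le_of_mul_le_mul_left (by rw [mul_zero]; nlinarith [hid, h3, h5]) h2m
      have hlow : -(2 * w) ≤ P (-(1/2)-d) (m+1) := by
        have hml : (2*(m:ℝ)+1) * (-(2 * w)) ≤
            (2*(m:ℝ)+1) * P (-(1/2)-d) (m+1) := by
          rw [hid]; nlinarith [h5, h4, h6, hw]
        exact le_of_mul_le_mul_left hml h2m
      rw [abs_le]
      exact ⟨hlow, by linarith⟩


lemma poch_neg_abs_le {d : ℝ} (hd0 : 0 ≤ d) (hd1 : d ≤ 1) (n : ℕ) :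
    |P (-d) n| ≤ (n.factorial : ℝ) := by
  cases n with
  | zero => rw [P_zero]; simp
  | succ m =>
      obtain ⟨hl, hu⟩ := poch_neg_bound hd0 hd1 (m+1) (by omega)
      rw [abs_le]
      have h1 : ((m+1-1).factorial : ℝ) ≤ ((m+1).factorial : ℝ) := by
        exact_mod_cast Nat.factorial_le (by omega)
      have h2 : (0:ℝ) < ((m+1-1).factorial : ℝ) := by positivity
      constructor
      · nlinarith
      · have : (0:ℝ) < ((m+1).factorial : ℝ) := by positivity
        linarith

lemma poch_neg_abs_mul {d : ℝ} (hd0 : 0 ≤ d) (hd1 : d ≤ 1) (n : ℕ) :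
    |P (-d) n| * (2*(n:ℝ)) ≤ 2 * d * (n.factorial : ℝ) := by
  cases n with
  | zero => simpa using hd0
  | succ m =>
      obtain ⟨hl, hu⟩ := poch_neg_bound hd0 hd1 (m+1) (by omega)
      have habs : |P (-d) (m+1)| ≤ d * ((m+1-1).factorial : ℝ) := by
        rw [abs_le]
        constructor
        · linarith
        · have h2 : (0:ℝ) ≤ d * ((m+1-1).factorial : ℝ) := by positivity
          linarith
      have hfe : ((m+1-1).factorial : ℝ) * ((m:ℝ)+1) = ((m+1).factorial : ℝ) := by
        have h : m+1-1 = m := by omega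
        rw [h]
        push_cast [Nat.factorial_succ]
        ring
      have habs2 : |P (-d) (m+1)| * (2*((m:ℝ)+1)) ≤ d * ((m+1-1).factorial : ℝ) * (2*((m:ℝ)+1)) := by
        apply mul_le_mul_of_nonneg_right habs (by positivity)
      calc |P (-d) (m+1)| * (2*((m+1:ℕ):ℝ)) = |P (-d) (m+1)| * (2*((m:ℝ)+1)) := by push_cast; ring
        _ ≤ d * ((m+1-1).factorial : ℝ) * (2*((m:ℝ)+1)) := habs2
        _ = 2 * d * (((m+1-1).factorial : ℝ) * ((m:ℝ)+1)) := by ring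
        _ = 2 * d * ((m+1).factorial : ℝ) := by rw [hfe]

noncomputable def Acoef (d r : ℝ) (n : ℕ) : ℝ := P (-d) n * r^n / (P (3/2) n * n.factorial)
noncomputable def Bcoef (d r : ℝ) (n : ℕ) : ℝ := P (-(1/2)-d) n * r^n / (P (1/2) n * n.factorial)

lemma poch_32_pos (n : ℕ) : 0 < P (3/2) n := ascPochhammer_pos n _ (by norm_num)

lemma Acoef_abs {d r : ℝ} (hd0 : 0 ≤ d) (hd1 : d ≤ 1) (hr : |r| ≤ 1/2) (n : ℕ) :
    |Acoef d r n| ≤ (1/2:ℝ)^n / n.factorial := by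
  have hfp : (0:ℝ) < n.factorial := by positivity
  have h32 : (0:ℝ) < P (3/2) n := poch_32_pos n
  have hnum : |P (-d) n * r^n| ≤ (n.factorial : ℝ) * (1/2:ℝ)^n := by
    rw [abs_mul, abs_pow]
    exact mul_le_mul (poch_neg_abs_le hd0 hd1 n) (pow_le_pow_left₀ (abs_nonneg r) hr n)
      (by positivity) (by positivity)
  have hden : (n.factorial : ℝ) * n.factorial ≤ P (3/2) n * n.factorial :=
    mul_le_mul_of_nonneg_right (fact_le_poch n) hfp.le
  have : |Acoef d r n| ≤ ((n.factorial : ℝ) * (1/2:ℝ)^n) / ((n.factorial : ℝ) * n.factorial) := by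
    rw [Acoef, abs_div, abs_of_pos (by positivity : (0:ℝ) < P (3/2) n * n.factorial)]
    exact div_le_div₀ (by positivity) hnum (by positivity) hden
  calc |Acoef d r n| ≤ ((n.factorial : ℝ) * (1/2:ℝ)^n) / ((n.factorial : ℝ) * n.factorial) := this
    _ = (1/2:ℝ)^n / n.factorial := by
        have hfn : (n.factorial : ℝ) ≠ 0 := by positivity
        field_simp

lemma Acoef_abs_mul {d r : ℝ} (hd0 : 0 ≤ d) (hd1 : d ≤ 1) (hr : |r| ≤ 1/2) (n : ℕ) :
    |Acoef d r n| * (2*(n:ℝ)) ≤ 2 * d * ((1/2:ℝ)^n / n.factorial) := by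
  have hfp : (0:ℝ) < n.factorial := by positivity
  have h32 : (0:ℝ) < P (3/2) n := poch_32_pos n
  have h1 : |Acoef d r n| * (2*(n:ℝ)) =
      (|P (-d) n| * (2*(n:ℝ))) * |r|^n / (P (3/2) n * n.factorial) := by
    rw [Acoef, abs_div, abs_mul, abs_pow,
      abs_of_pos (by positivity : (0:ℝ) < P (3/2) n * n.factorial)]
    ring
  rw [h1]
  have hnum : (|P (-d) n| * (2*(n:ℝ))) * |r|^n ≤ (2*d*n.factorial) * (1/2:ℝ)^n :=
    mul_le_mul (poch_neg_abs_mul hd0 hd1 n) (pow_le_pow_left₀ (abs_nonneg r) hr n)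
      (by positivity) (by positivity)
  have hden : (n.factorial : ℝ) * n.factorial ≤ P (3/2) n * n.factorial :=
    mul_le_mul_of_nonneg_right (fact_le_poch n) hfp.le
  calc (|P (-d) n| * (2*(n:ℝ))) * |r|^n / (P (3/2) n * n.factorial)
      ≤ ((2*d*n.factorial) * (1/2:ℝ)^n) / ((n.factorial:ℝ) * n.factorial) :=
        div_le_div₀ (by positivity) hnum (by positivity) hden
    _ = 2 * d * ((1/2:ℝ)^n / n.factorial) := by
        field_simp

lemma Bcoef_abs {d r : ℝ} (hd0 : 0 ≤ d) (hd2 : d ≤ 1/2) (hr : |r| ≤ 1/2) (n : ℕ) :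
    |Bcoef d r n| ≤ 2 * ((1/2:ℝ)^n / n.factorial) := by
  have hfp : (0:ℝ) < n.factorial := by positivity
  have hhp : (0:ℝ) < P (1/2) n := poch_half_pos n
  have hnum : |P (-(1/2)-d) n * r^n| ≤ (2 * P (1/2) n) * (1/2:ℝ)^n := by
    rw [abs_mul, abs_pow]
    exact mul_le_mul (poch_b_abs hd0 hd2 n) (pow_le_pow_left₀ (abs_nonneg r) hr n)
      (by positivity) (by positivity)
  have : |Bcoef d r n| ≤ ((2 * P (1/2) n) * (1/2:ℝ)^n) / (P (1/2) n * n.factorial) := by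
    rw [Bcoef, abs_div, abs_of_pos (by positivity : (0:ℝ) < P (1/2) n * n.factorial)]
    exact div_le_div₀ (by positivity) hnum (by positivity) le_rfl
  calc |Bcoef d r n| ≤ ((2 * P (1/2) n) * (1/2:ℝ)^n) / (P (1/2) n * n.factorial) := this
    _ = 2 * ((1/2:ℝ)^n / n.factorial) := by
        have h1 : P (1/2) n ≠ 0 := ne_of_gt hhp
        have h2 : (n.factorial : ℝ) ≠ 0 := by positivity
        field_simp

lemma Bcoef_key {d r : ℝ} (hd0 : 0 ≤ d) (hd2 : d ≤ 1/2) (hr : |r| ≤ 1/2) (n : ℕ) :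
    |Bcoef d r n * (2*(n:ℝ)-1) + r^n / n.factorial| ≤
      2 * d * ((n:ℝ) * (1/2:ℝ)^n / n.factorial) := by
  have hfp : (0:ℝ) < n.factorial := by positivity
  have hhp : (0:ℝ) < P (1/2) n := poch_half_pos n
  have hid : Bcoef d r n * (2*(n:ℝ)-1) + r^n / n.factorial =
      ((2*(n:ℝ)-1) * P (-(1/2)-d) n + P (1/2) n) * r^n / (P (1/2) n * n.factorial) := by
    rw [Bcoef]
    field_simp
  rw [hid, abs_div, abs_mul, abs_pow,
    abs_of_pos (by positivity : (0:ℝ) < P (1/2) n * n.factorial)]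
  have hnum : |(2*(n:ℝ)-1) * P (-(1/2)-d) n + P (1/2) n| * |r|^n ≤
      (2*d*(n:ℝ) * P (1/2) n) * (1/2:ℝ)^n := by
    apply mul_le_mul (poch_b_key hd0 hd2 n) (pow_le_pow_left₀ (abs_nonneg r) hr n)
      (by positivity)
    positivity
  calc |(2*(n:ℝ)-1) * P (-(1/2)-d) n + P (1/2) n| * |r|^n / (P (1/2) n * n.factorial)
      ≤ ((2*d*(n:ℝ) * P (1/2) n) * (1/2:ℝ)^n) / (P (1/2) n * n.factorial) :=
        div_le_div₀ (by positivity) hnum (by positivity) le_rfl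
    _ = 2 * d * ((n:ℝ) * (1/2:ℝ)^n / n.factorial) := by
        have h1 : P (1/2) n ≠ 0 := ne_of_gt hhp
        have h2 : (n.factorial : ℝ) ≠ 0 := by positivity
        field_simp

lemma summable_aux2 {c K : ℝ} {f : ℕ → ℝ} (hf : ∀ n, |f n| ≤ c * (K ^ n / n.factorial)) :
    Summable f :=
  Summable.of_norm_bounded ((Real.summable_pow_div_factorial K).mul_left c) hf

lemma nat_le_two_pow (n : ℕ) : (n : ℝ) ≤ 2 ^ n := by
  exact_mod_cast (Nat.lt_two_pow_self (n := n)).le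

lemma two_n_half_pow (n : ℕ) : 2 * (n:ℝ) * (1/2:ℝ)^n ≤ 2 := by
  have h1 : (n:ℝ) * (1/2:ℝ)^n ≤ 1 := by
    have h2 : (0:ℝ) < 2^n := by positivity
    have h3 : (1/2:ℝ)^n = 1/2^n := by rw [div_pow]; norm_num
    rw [h3]
    rw [mul_one_div, div_le_one h2]
    exact nat_le_two_pow n
  nlinarith [pow_nonneg (by norm_num : (0:ℝ) ≤ 1/2) n, Nat.cast_nonneg (α := ℝ) n]

lemma summable_co {co : ℕ → ℝ} (hco : ∀ n, |co n| ≤ 2 * ((1/2:ℝ)^n / n.factorial)) (y : ℝ) :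
    Summable (fun n => co n * y^(2*n)) := by
  apply summable_aux2 (c := 2) (K := y^2/2)
  intro n
  rw [abs_mul, pow_mul, abs_pow, abs_of_nonneg (sq_nonneg y)]
  calc |co n| * (y^2)^n ≤ 2 * ((1/2:ℝ)^n / n.factorial) * (y^2)^n := by
        apply mul_le_mul_of_nonneg_right (hco n) (by positivity)
    _ = 2 * ((y^2/2)^n / n.factorial) := by
        rw [div_pow, div_pow, one_pow]
        field_simp


lemma hasDerivAt_series {co : ℕ → ℝ} (hco : ∀ n, |co n| ≤ 2 * ((1/2:ℝ)^n / n.factorial))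
    {R : ℝ} (hR : 1 ≤ R) {b : ℝ} (hb : |b| < R) :
    HasDerivAt (fun y => ∑' n, co n * y^(2*n))
      (∑' n, co n * (((2*n : ℕ):ℝ) * b^(2*n-1))) b := by
  have hR0 : 0 < R := by linarith
  apply hasDerivAt_tsum_of_isPreconnected
    (u := fun n => 8 * ((R^2)^n / n.factorial))
    (g := fun n y => co n * y^(2*n))
    (g' := fun n y => co n * (((2*n : ℕ):ℝ) * y^(2*n-1)))
    (((Real.summable_pow_div_factorial (R^2)).mul_left 8))
    (Metric.isOpen_ball) ((convex_ball (0:ℝ) R).isPreconnected) (y₀ := b) (y := b)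
  · intro n y _
    exact (hasDerivAt_pow (2*n) y).const_mul (co n)
  · intro n y hy
    rw [Metric.mem_ball, dist_zero_right, Real.norm_eq_abs] at hy
    have hyR : |y| ≤ R := hy.le
    have h1 : |co n * (((2*n : ℕ):ℝ) * y^(2*n-1))| ≤
        (2 * ((1/2:ℝ)^n / n.factorial)) * ((2*(n:ℝ)) * R^(2*n)) := by
      rw [abs_mul, abs_mul]
      apply mul_le_mul (hco n) _ (by positivity) (by positivity)
      apply mul_le_mul _ _ (by positivity) (by positivity)
      · rw [abs_of_nonneg (by positivity : (0:ℝ) ≤ ((2*n : ℕ):ℝ))]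
        push_cast
        exact le_refl _
      · calc |y^(2*n-1)| = |y|^(2*n-1) := abs_pow y _
          _ ≤ R^(2*n-1) := pow_le_pow_left₀ (abs_nonneg y) hyR _
          _ ≤ R^(2*n) := pow_le_pow_right₀ hR (by omega)
    rw [Real.norm_eq_abs]
    refine h1.trans ?_
    have h2 : 2 * (n:ℝ) * (1/2:ℝ)^n ≤ 2 := two_n_half_pow n
    have h3 : (0:ℝ) < n.factorial := by positivity
    have h4 : (0:ℝ) ≤ (R^2)^n := by positivity
    calc (2 * ((1/2:ℝ)^n / n.factorial)) * ((2*(n:ℝ)) * R^(2*n))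
        = (2 * (2*(n:ℝ) * (1/2:ℝ)^n)) * ((R^2)^n / n.factorial) := by
          rw [pow_mul]; field_simp
      _ ≤ (2 * 2) * ((R^2)^n / n.factorial) := by
          apply mul_le_mul_of_nonneg_right _ (by positivity)
          nlinarith
      _ ≤ 8 * ((R^2)^n / n.factorial) := by
          apply mul_le_mul_of_nonneg_right _ (by positivity)
          norm_num
  · rw [Metric.mem_ball, dist_zero_right, Real.norm_eq_abs]; exact hb
  · exact summable_co hco b
  · rw [Metric.mem_ball, dist_zero_right, Real.norm_eq_abs]; exact hb

set_option maxHeartbeats 2000000 in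
lemma core (C α : ℝ) (hC : 1 ≤ C) (hα0 : 0 < α) (hα4 : α < 1/4) {b : ℝ}
    (hb0 : 0 < b) (hbC : b ≤ C) :
    b * deriv (fun y => F α y) b - F α b ≤
      4*α*C*Real.exp (C^2) +
        Real.Gamma (1 - α/(2*α-1)) /
          (Real.sqrt (2*(1-2*α)) * Real.Gamma (3/2 - α/(2*α-1))) *
          (4*α*Real.exp (C^2) - Real.exp (-(C^2)/2)) := by
  have hne1 : (2*α-1) ≠ 0 := by intro h; nlinarith
  have hne2 : (0:ℝ) < 1-2*α := by linarith
  set d : ℝ := α/(1-2*α) with hddef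
  set r : ℝ := (2*α-1)/2 with hrdef
  have hd0 : 0 ≤ d := div_nonneg hα0.le hne2.le
  have hd2α : d ≤ 2*α := by
    rw [hddef, div_le_iff₀ hne2]
    nlinarith
  have hd12 : d ≤ 1/2 := by linarith
  have hd1 : d ≤ 1 := by linarith
  have hr : |r| ≤ 1/2 := by
    rw [hrdef, abs_le]
    constructor <;> [linarith; linarith]
  have hγ1 : α/(2*α-1) = -d := by
    rw [hddef, ← neg_div, eq_div_iff hne2.ne', div_mul_eq_mul_div, div_eq_iff hne1]
    ring
  have hγ2 : α/(2*α-1) - 1/2 = -(1/2) - d := by rw [hγ1]; ring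
  set c : ℝ := Real.Gamma (1 - α/(2*α-1)) /
      (Real.sqrt (2*(1-2*α)) * Real.Gamma (3/2 - α/(2*α-1))) with hcdef
  have hc0 : 0 ≤ c := by
    rw [hcdef, hγ1]
    have h1 : 0 < Real.Gamma (1 - -d) := Real.Gamma_pos_of_pos (by linarith)
    have h2 : 0 < Real.Gamma (3/2 - -d) := Real.Gamma_pos_of_pos (by linarith)
    have h3 : 0 < Real.sqrt (2*(1-2*α)) := Real.sqrt_pos.mpr (by linarith)
    positivity
  have hcoA : ∀ n, |Acoef d r n| ≤ 2 * ((1/2:ℝ)^n / n.factorial) := by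
    intro n
    have := Acoef_abs hd0 hd1 hr n
    have h2 : (0:ℝ) ≤ (1/2:ℝ)^n / n.factorial := by positivity
    linarith
  have hcoB : ∀ n, |Bcoef d r n| ≤ 2 * ((1/2:ℝ)^n / n.factorial) :=
    fun n => Bcoef_abs hd0 hd12 hr n
  -- F as a power series
  have hFeq : ∀ y : ℝ, F α y =
      y * (∑' n, Acoef d r n * y^(2*n)) + c * (∑' n, Bcoef d r n * y^(2*n)) := by
    intro y
    have hz : y^2*(2*α-1)/2 = y^2 * r := by rw [hrdef]; ring
    have hM1 : M (α/(2*α-1)) (3/2) (y^2*(2*α-1)/2) = ∑' n, Acoef d r n * y^(2*n) := by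
      simp only [M]
      apply tsum_congr
      intro n
      rw [hγ1, hz, mul_pow, Acoef, pow_mul]
      simp only [P]
      ring
    have hM2 : M (α/(2*α-1) - 1/2) (1/2) (y^2*(2*α-1)/2) = ∑' n, Bcoef d r n * y^(2*n) := by
      simp only [M]
      apply tsum_congr
      intro n
      rw [hγ2, hz, mul_pow, Bcoef, pow_mul]
      simp only [P]
      ring
    rw [F, hM1, hM2, hcdef]
  -- derivative
  have hR : 1 ≤ C + 1 := by linarith
  have hbR : |b| < C + 1 := by rw [abs_of_pos hb0]; linarith
  have hg1 := hasDerivAt_series hcoA hR hbR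
  have hg2 := hasDerivAt_series hcoB hR hbR
  have hFder : HasDerivAt (fun y => F α y)
      (1 * (∑' n, Acoef d r n * b^(2*n)) +
        b * (∑' n, Acoef d r n * (((2*n : ℕ):ℝ) * b^(2*n-1))) +
        c * (∑' n, Bcoef d r n * (((2*n : ℕ):ℝ) * b^(2*n-1)))) b := by
    have h := ((hasDerivAt_id b).mul hg1).add (hg2.const_mul c)
    have heq : (fun y => F α y) =
        (fun y => y * (∑' n, Acoef d r n * y^(2*n)) + c * (∑' n, Bcoef d r n * y^(2*n))) :=
      funext hFeq
    rw [heq]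
    exact h
  rw [hFder.deriv, hFeq b]
  -- the two series S1 and S2
  set D1 := ∑' n, Acoef d r n * (((2*n : ℕ):ℝ) * b^(2*n-1)) with hD1
  set D2 := ∑' n, Bcoef d r n * (((2*n : ℕ):ℝ) * b^(2*n-1)) with hD2
  have hS1 : b^2 * D1 = ∑' n, Acoef d r n * (2*(n:ℝ) * b^(2*n+1)) := by
    rw [hD1, ← tsum_mul_left]
    apply tsum_congr
    intro n
    cases n with
    | zero => simp
    | succ m =>
        rw [show 2*(m+1)-1 = 2*m+1 from by omega,
          show 2*(m+1)+1 = (2*m+1)+2 from by omega, pow_add]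
        push_cast
        ring
  have hsumB2 : Summable (fun n => Bcoef d r n * (2*(n:ℝ) * b^(2*n))) := by
    apply summable_aux2 (c := 4) (K := b^2)
    intro n
    rw [abs_mul]
    have h1 : |Bcoef d r n| ≤ 2 * ((1/2:ℝ)^n / n.factorial) := hcoB n
    have h2 : |2*(n:ℝ) * b^(2*n)| = 2*(n:ℝ) * (b^2)^n := by
      rw [abs_mul, abs_of_nonneg (by positivity : (0:ℝ) ≤ 2*(n:ℝ)), pow_mul,
        abs_of_nonneg (by positivity : (0:ℝ) ≤ (b^2)^n)]
    rw [h2]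
    have h3 := two_n_half_pow n
    have h4 : (0:ℝ) < n.factorial := by positivity
    calc |Bcoef d r n| * (2*(n:ℝ) * (b^2)^n)
        ≤ 2 * ((1/2:ℝ)^n / n.factorial) * (2*(n:ℝ) * (b^2)^n) := by
          apply mul_le_mul_of_nonneg_right h1 (by positivity)
      _ = (2*(n:ℝ) * (1/2:ℝ)^n) * 2 * ((b^2)^n / n.factorial) := by
          field_simp
      _ ≤ 2 * 2 * ((b^2)^n / n.factorial) := by
          apply mul_le_mul_of_nonneg_right _ (by positivity)
          nlinarith
      _ = 4 * ((b^2)^n / n.factorial) := by ring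
  have hsumB0 : Summable (fun n => Bcoef d r n * b^(2*n)) := summable_co hcoB b
  have hS2 : b * D2 - (∑' n, Bcoef d r n * b^(2*n)) =
      ∑' n, Bcoef d r n * ((2*(n:ℝ)-1) * b^(2*n)) := by
    have hbD2 : b * D2 = ∑' n, Bcoef d r n * (2*(n:ℝ) * b^(2*n)) := by
      rw [hD2, ← tsum_mul_left]
      apply tsum_congr
      intro n
      cases n with
      | zero => simp
      | succ m =>
          rw [show 2*(m+1)-1 = 2*m+1 from by omega,
            show 2*(m+1) = (2*m+1)+1 from by omega, pow_add]
          push_cast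
          ring
    rw [hbD2, ← Summable.tsum_sub hsumB2 hsumB0]
    apply tsum_congr
    intro n
    ring
  have key : b * (1 * (∑' n, Acoef d r n * b^(2*n)) + b * D1 + c * D2) -
      (b * (∑' n, Acoef d r n * b^(2*n)) + c * (∑' n, Bcoef d r n * b^(2*n))) =
      (∑' n, Acoef d r n * (2*(n:ℝ) * b^(2*n+1))) +
        c * (∑' n, Bcoef d r n * ((2*(n:ℝ)-1) * b^(2*n))) := by
    rw [← hS1, ← hS2]
    ring
  rw [key]
  -- bound S1
  have hbb : b^2 ≤ C^2 := by nlinarith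
  have hexpb : Real.exp (b^2) ≤ Real.exp (C^2) := Real.exp_le_exp.mpr hbb
  have hS1bound : |∑' n, Acoef d r n * (2*(n:ℝ) * b^(2*n+1))| ≤
      2*d*b*Real.exp (b^2) := by
    have hterm : ∀ n, |Acoef d r n * (2*(n:ℝ) * b^(2*n+1))| ≤
        2*d*b * ((b^2)^n / n.factorial) := by
      intro n
      rw [abs_mul]
      have h2 : |2*(n:ℝ) * b^(2*n+1)| = 2*(n:ℝ) * (b^2)^n * b := by
        rw [abs_mul, abs_of_nonneg (by positivity : (0:ℝ) ≤ 2*(n:ℝ)), pow_add, pow_mul,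
          abs_of_nonneg (by positivity : (0:ℝ) ≤ (b^2)^n * b^1)]
        ring
      rw [h2]
      have h3 := Acoef_abs_mul hd0 hd1 hr n
      have h5 : (0:ℝ) ≤ (b^2)^n * b := by positivity
      calc |Acoef d r n| * (2*(n:ℝ) * (b^2)^n * b)
          = (|Acoef d r n| * (2*(n:ℝ))) * ((b^2)^n * b) := by ring
        _ ≤ (2 * d * ((1/2:ℝ)^n / n.factorial)) * ((b^2)^n * b) := by
            apply mul_le_mul_of_nonneg_right h3 h5
        _ ≤ (2 * d * ((1:ℝ) / n.factorial)) * ((b^2)^n * b) := by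
            apply mul_le_mul_of_nonneg_right _ h5
            have h8 : (1/2:ℝ)^n ≤ 1 := by
              apply pow_le_one₀ <;> norm_num
            gcongr
        _ = 2*d*b * ((b^2)^n / n.factorial) := by ring
    have hsum : Summable (fun n => 2*d*b * ((b^2)^n / n.factorial)) :=
      (Real.summable_pow_div_factorial (b^2)).mul_left _
    have := tsum_le_of_abs_le hterm hsum
    calc |∑' n, Acoef d r n * (2*(n:ℝ) * b^(2*n+1))|
        ≤ ∑' n, 2*d*b * ((b^2)^n / n.factorial) := this
      _ = 2*d*b * ∑' n, (b^2)^n / (n.factorial:ℝ) := tsum_mul_left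
      _ = 2*d*b * Real.exp (b^2) := by rw [tsum_exp_eq]
  -- bound S2
  have hsum_e : Summable (fun n => (r*b^2)^n / (n.factorial:ℝ)) :=
    Real.summable_pow_div_factorial (r*b^2)
  have hte_eq : ∀ n : ℕ, Bcoef d r n * ((2*(n:ℝ)-1) * b^(2*n)) + (r*b^2)^n/(n.factorial:ℝ) =
      (Bcoef d r n * (2*(n:ℝ)-1) + r^n/(n.factorial:ℝ)) * (b^2)^n := by
    intro n
    rw [mul_pow, pow_mul]
    ring
  have hbound_te : ∀ n : ℕ,
      |Bcoef d r n * ((2*(n:ℝ)-1) * b^(2*n)) + (r*b^2)^n/(n.factorial:ℝ)| ≤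
        2*d * ((b^2)^n / n.factorial) := by
    intro n
    rw [hte_eq n, abs_mul, abs_of_nonneg (by positivity : (0:ℝ) ≤ (b^2)^n)]
    have h1 := Bcoef_key hd0 hd12 hr n
    have h2 : (n:ℝ) * (1/2:ℝ)^n ≤ 1 := by
      have := two_n_half_pow n
      linarith
    have h4 : (0:ℝ) < n.factorial := by positivity
    calc |Bcoef d r n * (2*(n:ℝ)-1) + r^n/(n.factorial:ℝ)| * (b^2)^n
        ≤ (2 * d * ((n:ℝ) * (1/2:ℝ)^n / n.factorial)) * (b^2)^n := by
          apply mul_le_mul_of_nonneg_right h1 (by positivity)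
      _ ≤ (2 * d * ((1:ℝ) / n.factorial)) * (b^2)^n := by
          apply mul_le_mul_of_nonneg_right _ (by positivity)
          gcongr
      _ = 2*d * ((b^2)^n / n.factorial) := by ring
  have hsum_te : Summable (fun n =>
      Bcoef d r n * ((2*(n:ℝ)-1) * b^(2*n)) + (r*b^2)^n/(n.factorial:ℝ)) :=
    summable_aux2 (c := 2*d) (K := b^2) hbound_te
  have hS2bound : (∑' n, Bcoef d r n * ((2*(n:ℝ)-1) * b^(2*n))) ≤
      2*d*Real.exp (b^2) - Real.exp (r*b^2) := by
    have hsplit : (∑' n, Bcoef d r n * ((2*(n:ℝ)-1) * b^(2*n))) =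
        (∑' n, (Bcoef d r n * ((2*(n:ℝ)-1) * b^(2*n)) + (r*b^2)^n/(n.factorial:ℝ))) -
          (∑' n, (r*b^2)^n/(n.factorial:ℝ)) := by
      rw [← Summable.tsum_sub hsum_te hsum_e]
      apply tsum_congr
      intro n
      ring
    rw [hsplit, tsum_exp_eq]
    have h5 : (∑' n, (Bcoef d r n * ((2*(n:ℝ)-1) * b^(2*n)) + (r*b^2)^n/(n.factorial:ℝ))) ≤
        2*d*Real.exp (b^2) := by
      have h6 := tsum_le_of_abs_le hbound_te
        ((Real.summable_pow_div_factorial (b^2)).mul_left (2*d))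
      calc (∑' n, (Bcoef d r n * ((2*(n:ℝ)-1) * b^(2*n)) + (r*b^2)^n/(n.factorial:ℝ)))
          ≤ |∑' n, (Bcoef d r n * ((2*(n:ℝ)-1) * b^(2*n)) + (r*b^2)^n/(n.factorial:ℝ))| :=
            le_abs_self _
        _ ≤ ∑' n, 2*d * ((b^2)^n / (n.factorial:ℝ)) := h6
        _ = 2*d * ∑' n, (b^2)^n / (n.factorial:ℝ) := tsum_mul_left
        _ = 2*d * Real.exp (b^2) := by rw [tsum_exp_eq]
    linarith
  -- assemble
  have hexp_pos : (0:ℝ) < Real.exp (C^2) := Real.exp_pos _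
  have hexpb_pos : (0:ℝ) < Real.exp (b^2) := Real.exp_pos _
  have hfin1 : (∑' n, Acoef d r n * (2*(n:ℝ) * b^(2*n+1))) ≤ 4*α*C*Real.exp (C^2) := by
    have h7 : 2*d*b*Real.exp (b^2) ≤ 4*α*C*Real.exp (C^2) := by
      have h9 : 2*d ≤ 4*α := by linarith
      have s1 : 2*d*b ≤ 4*α*C := by nlinarith
      exact mul_le_mul s1 hexpb hexpb_pos.le (by positivity)
    exact (le_abs_self _).trans (hS1bound.trans h7)
  have hrb : Real.exp (-(C^2)/2) ≤ Real.exp (r*b^2) := by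
    apply Real.exp_le_exp.mpr
    have hrl : -(1/2) ≤ r := (abs_le.mp hr).1
    nlinarith
  have hfin2 : (∑' n, Bcoef d r n * ((2*(n:ℝ)-1) * b^(2*n))) ≤
      4*α*Real.exp (C^2) - Real.exp (-(C^2)/2) := by
    have h8 : 2*d*Real.exp (b^2) ≤ 4*α*Real.exp (C^2) := by
      have h9 : 2*d ≤ 4*α := by linarith
      exact mul_le_mul h9 hexpb hexpb_pos.le (by positivity)
    linarith [hS2bound, hrb]
  have hfin2' : c * (∑' n, Bcoef d r n * ((2*(n:ℝ)-1) * b^(2*n))) ≤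
      c * (4*α*Real.exp (C^2) - Real.exp (-(C^2)/2)) :=
    mul_le_mul_of_nonneg_left hfin2 hc0
  linarith

lemma gamma_cont_at (x : ℝ) (hx : 0 < x) : ContinuousAt Real.Gamma x :=
  (Real.differentiableAt_Gamma (fun m => by
    have h := Nat.cast_nonneg (α := ℝ) m
    intro hc
    rw [hc] at hx
    linarith)).continuousAt

lemma phi_cont (C : ℝ) : ContinuousAt (fun α : ℝ =>
    4*α*C*Real.exp (C^2) +
      Real.Gamma (1 - α/(2*α-1)) /
        (Real.sqrt (2*(1-2*α)) * Real.Gamma (3/2 - α/(2*α-1))) *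
      (4*α*Real.exp (C^2) - Real.exp (-(C^2)/2))) 0 := by
  have hinner : ContinuousAt (fun α : ℝ => α/(2*α-1)) 0 := by
    apply ContinuousAt.div continuousAt_id
      ((by fun_prop : Continuous fun α : ℝ => 2*α-1).continuousAt)
    norm_num
  have h1 : ContinuousAt (fun α : ℝ => Real.Gamma (1 - α/(2*α-1))) 0 := by
    apply ContinuousAt.comp_of_eq (gamma_cont_at 1 one_pos)
      ((continuousAt_const.sub hinner) : ContinuousAt (fun α : ℝ => 1 - α/(2*α-1)) 0)
    norm_num
  have h2 : ContinuousAt (fun α : ℝ => Real.Gamma (3/2 - α/(2*α-1))) 0 := by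
    apply ContinuousAt.comp_of_eq (gamma_cont_at (3/2) (by norm_num))
      ((continuousAt_const.sub hinner) : ContinuousAt (fun α : ℝ => 3/2 - α/(2*α-1)) 0)
    norm_num
  have h3 : ContinuousAt (fun α : ℝ => Real.sqrt (2*(1-2*α))) 0 :=
    (Real.continuous_sqrt.comp (by fun_prop)).continuousAt
  have h4 : ContinuousAt (fun α : ℝ =>
      Real.sqrt (2*(1-2*α)) * Real.Gamma (3/2 - α/(2*α-1))) 0 := h3.mul h2
  have h5 : (fun α : ℝ => Real.sqrt (2*(1-2*α)) * Real.Gamma (3/2 - α/(2*α-1))) 0 ≠ 0 := by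
    show Real.sqrt (2*(1-2*(0:ℝ))) * Real.Gamma (3/2 - 0/(2*0-1)) ≠ 0
    rw [show (3/2 - 0/(2*0-1) : ℝ) = 3/2 by norm_num]
    have hs : 0 < Real.sqrt (2*(1-2*(0:ℝ))) := Real.sqrt_pos.mpr (by norm_num)
    have hg : 0 < Real.Gamma (3/2 : ℝ) := Real.Gamma_pos_of_pos (by norm_num)
    positivity
  have h6 : ContinuousAt (fun α : ℝ =>
      Real.Gamma (1 - α/(2*α-1)) /
        (Real.sqrt (2*(1-2*α)) * Real.Gamma (3/2 - α/(2*α-1)))) 0 := h1.div h4 h5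
  exact ((by fun_prop : Continuous fun α : ℝ => 4*α*C*Real.exp (C^2)).continuousAt).add
    (h6.mul ((by fun_prop : Continuous fun α : ℝ =>
      4*α*Real.exp (C^2) - Real.exp (-(C^2)/2)).continuousAt))

theorem stmt_13 (B : ℝ → ℝ) (hBpos : ∀ α ∈ Set.Ioo (0 : ℝ) (1 / 2), 0 < B α)
    (hB : ∀ α ∈ Set.Ioo (0 : ℝ) (1 / 2),
      B α * deriv (fun y => F α y) (B α) = F α (B α)) :
    Tendsto B (nhdsWithin 0 (Set.Ioo (0 : ℝ) (1 / 2))) atTop := by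
  rw [Filter.tendsto_atTop]
  intro C₀
  set C := max C₀ 1 with hCdef
  have hC : 1 ≤ C := le_max_right _ _
  set φ : ℝ → ℝ := fun α =>
    4*α*C*Real.exp (C^2) +
      Real.Gamma (1 - α/(2*α-1)) /
        (Real.sqrt (2*(1-2*α)) * Real.Gamma (3/2 - α/(2*α-1))) *
      (4*α*Real.exp (C^2) - Real.exp (-(C^2)/2)) with hφdef
  have hφ0 : φ 0 < 0 := by
    rw [hφdef]
    show 4*0*C*Real.exp (C^2) +
      Real.Gamma (1 - 0/(2*0-1)) /
        (Real.sqrt (2*(1-2*0)) * Real.Gamma (3/2 - 0/(2*0-1))) *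
      (4*0*Real.exp (C^2) - Real.exp (-(C^2)/2)) < 0
    rw [show (1 - 0/(2*0-1) : ℝ) = 1 by norm_num,
      show (3/2 - 0/(2*0-1) : ℝ) = 3/2 by norm_num]
    have hg1 : 0 < Real.Gamma (1 : ℝ) := Real.Gamma_pos_of_pos one_pos
    have hg2 : 0 < Real.Gamma (3/2 : ℝ) := Real.Gamma_pos_of_pos (by norm_num)
    have hs : 0 < Real.sqrt (2*(1-2*(0:ℝ))) := Real.sqrt_pos.mpr (by norm_num)
    have he : 0 < Real.exp (-(C^2)/2) := Real.exp_pos _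
    have hq : 0 < Real.Gamma (1:ℝ) / (Real.sqrt (2*(1-2*(0:ℝ))) * Real.Gamma (3/2 : ℝ)) := by
      positivity
    nlinarith
  have hlim : Filter.Tendsto φ (nhdsWithin 0 (Set.Ioo (0:ℝ) (1/2))) (nhds (φ 0)) :=
    ((phi_cont C).tendsto).mono_left nhdsWithin_le_nhds
  have hφev : ∀ᶠ α in nhdsWithin 0 (Set.Ioo (0:ℝ) (1/2)), φ α < 0 :=
    hlim.eventually_lt_const hφ0
  have hα14 : ∀ᶠ α in nhdsWithin 0 (Set.Ioo (0:ℝ) (1/2)), α < 1/4 :=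
    Filter.Eventually.filter_mono nhdsWithin_le_nhds
      (eventually_lt_nhds (by norm_num : (0:ℝ) < 1/4))
  have hmem : ∀ᶠ α in nhdsWithin 0 (Set.Ioo (0:ℝ) (1/2)), α ∈ Set.Ioo (0:ℝ) (1/2) :=
    eventually_mem_nhdsWithin
  filter_upwards [hφev, hα14, hmem] with α h1 h2 h3
  by_contra hcon
  push_neg at hcon
  have hb0 : 0 < B α := hBpos α h3
  have hbC : B α ≤ C := le_trans hcon.le (le_max_left _ _)
  have hcore := core C α hC h3.1 h2 hb0 hbC
  have heq := hB α h3
  rw [heq] at hcore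
  simp only [sub_self] at hcore
  rw [hφdef] at h1
  simp only at h1
  linarith [hcore, h1]
end

section
/- Let α ≥ 0 and let f : ℝ → ℝ be twice continuously differentiable with f''(y) − (2α−1)·y·f'(y) − f(y) = 0 for all y ∈ ℝ. Define V(x,t) = √(1−t)·f(x/√(1−t)) for x ∈ ℝ and 0 ≤ t < 1. Then V satisfies the partial differential equation V_t(x,t) − (α·x/(1−t))·V_x(x,t) + (1/2)·V_{xx}(x,t) = 0 for all x ∈ ℝ and 0 ≤ t < 1, where V_t denotes the partial derivative in t, and V_x, V_{xx} denote the first and second partial derivatives in x. -/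
open Real Filter

theorem stmt_19 (α : ℝ) (hα : 0 ≤ α) (f : ℝ → ℝ) (hf : ContDiff ℝ 2 f)
    (hODE : ∀ y : ℝ, deriv (deriv f) y - (2 * α - 1) * y * deriv f y - f y = 0) :
    ∀ x : ℝ, ∀ t : ℝ, 0 ≤ t → t < 1 →
      deriv (fun t' : ℝ => Real.sqrt (1 - t') * f (x / Real.sqrt (1 - t'))) t -
        α * x / (1 - t) *
          deriv (fun x' : ℝ => Real.sqrt (1 - t) * f (x' / Real.sqrt (1 - t))) x +
        1 / 2 *
          deriv (deriv (fun x' : ℝ => Real.sqrt (1 - t) * f (x' / Real.sqrt (1 - t)))) x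
        = 0 := by
  intro x t ht0 ht1
  have hfd : Differentiable ℝ f := hf.differentiable (by norm_num)
  have hfd2 : Differentiable ℝ (deriv f) := by
    have h2 : ContDiff ℝ (1 + 1 : WithTop ℕ∞) f := by norm_num; exact hf
    exact (contDiff_succ_iff_deriv.mp h2).2.2.differentiable (by norm_num)
  have h1t : (0:ℝ) < 1 - t := by linarith
  set s := Real.sqrt (1 - t) with hsdef
  have hs : 0 < s := Real.sqrt_pos.mpr h1t
  have hs2 : s ^ 2 = 1 - t := Real.sq_sqrt h1t.le
  have hsne : s ≠ 0 := hs.ne'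
  -- first x-derivative
  have hx1 : ∀ z : ℝ, deriv (fun x' : ℝ => s * f (x' / s)) z = deriv f (z / s) := by
    intro z
    have h : HasDerivAt (fun x' : ℝ => s * f (x' / s))
        (s * (deriv f (z / s) * (1 / s))) z :=
      (((hfd (z / s)).hasDerivAt.comp z ((hasDerivAt_id z).div_const s))).const_mul s
    rw [h.deriv]; field_simp
  -- second x-derivative
  have hx2 : deriv (deriv (fun x' : ℝ => s * f (x' / s))) x
      = deriv (deriv f) (x / s) * (1 / s) := by
    have heq : deriv (fun x' : ℝ => s * f (x' / s)) = fun z => deriv f (z / s) :=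
      funext hx1
    rw [heq]
    have h : HasDerivAt (fun z : ℝ => deriv f (z / s))
        (deriv (deriv f) (x / s) * (1 / s)) x :=
      by have := (hfd2 (x / s)).hasDerivAt.comp x ((hasDerivAt_id' x).div_const s); exact this
    exact h.deriv
  -- t-derivative
  have hsq : HasDerivAt (fun t' : ℝ => Real.sqrt (1 - t')) (-1 / (2 * s)) t := by
    have h1 : HasDerivAt (fun t' : ℝ => 1 - t') (-1) t := (hasDerivAt_id t).const_sub 1
    exact h1.sqrt h1t.ne'
  have hinner : HasDerivAt (fun t' : ℝ => x / Real.sqrt (1 - t'))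
      ((0 * s - x * (-1 / (2 * s))) / s ^ 2) t :=
    (hasDerivAt_const t x).div hsq hsne
  have hcomp : HasDerivAt (fun t' : ℝ => f (x / Real.sqrt (1 - t')))
      (deriv f (x / s) * ((0 * s - x * (-1 / (2 * s))) / s ^ 2)) t :=
    (hfd (x / s)).hasDerivAt.comp t hinner
  have ht : deriv (fun t' : ℝ => Real.sqrt (1 - t') * f (x / Real.sqrt (1 - t'))) t
      = -1 / (2 * s) * f (x / s)
        + s * (deriv f (x / s) * ((0 * s - x * (-1 / (2 * s))) / s ^ 2)) :=
    (hsq.mul hcomp).deriv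
  rw [ht, hx1 x, hx2, ← hs2]
  obtain ⟨y, hy⟩ : ∃ y : ℝ, x = y * s := ⟨x / s, by field_simp⟩
  subst hy
  have hys : y * s / s = y := by field_simp
  rw [hys]
  have hO := hODE y
  field_simp
  linear_combination hO
end
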